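/- arXiv:1611.04535 — 10 statements merged into one kernel-verified Lean document; each statement's English description precedes it below -/
import Mathlib

section
/- Fix n ≥ 1, an n×n real matrix A, vectors u_1, …, u_n ∈ ℝ^n, and Z ∈ ℝ^n, and let F(s) = slin_s(A,u,Z) for s > 0. If 0 < s₁ < s₂ and the open interval (s₁, s₂) contains none of the values |⟨u_i, Z⟩| for i = 1, …, n, then there exist real numbers a, b, c such that F(s) = a/s² + b/s + c for every s ∈ (s₁, s₂). In particular, F consists of at most n+1 such piecewise components on (0, ∞), and any border between two components lies at some s = |⟨u_i, Z⟩|. -/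
/-- The `s`-linear rounding function `φ_s`. -/
noncomputable def phi (s y : ℝ) : ℝ := if y < -s then -1 else if y ≤ s then y / s else 1

/-- `slin_s(A, u, Z) = Σ_{i,j} A i j · φ_s(⟨u_i, Z⟩) · φ_s(⟨u_j, Z⟩)`. -/
noncomputable def slin (n : ℕ) (s : ℝ) (A : Fin n → Fin n → ℝ) (u : Fin n → Fin n → ℝ)
    (Z : Fin n → ℝ) : ℝ :=
  ∑ i, ∑ j, A i j * phi s (∑ k, u i k * Z k) * phi s (∑ k, u j k * Z k)

lemma phi_affine (s₁ s₂ y : ℝ) (hs₁ : 0 < s₁) (hs₁₂ : s₁ < s₂)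
    (hno : |y| ∉ Set.Ioo s₁ s₂) :
    ∃ p q : ℝ, ∀ s ∈ Set.Ioo s₁ s₂, phi s y = p / s + q := by
  rcases le_or_gt (|y|) s₁ with h | h
  · refine ⟨y, 0, fun s hs => ?_⟩
    have h1 : |y| ≤ s := h.trans hs.1.le
    rw [abs_le] at h1
    have : ¬ y < -s := by linarith [h1.1]
    simp [phi, this, h1.2]
  · have h2 : s₂ ≤ |y| := by
      by_contra hc
      exact hno ⟨h, lt_of_not_ge hc⟩
    rcases le_or_gt 0 y with hy | hy
    · refine ⟨0, 1, fun s hs => ?_⟩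
      rw [abs_of_nonneg hy] at h2
      have hsy : ¬ y ≤ s := by linarith [hs.2]
      have : ¬ y < -s := by linarith [hs.1, hs₁]
      simp [phi, this, hsy]
    · refine ⟨0, -1, fun s hs => ?_⟩
      rw [abs_of_neg hy] at h2
      have : y < -s := by linarith [hs.2]
      simp [phi, this]

theorem stmt_2 (n : ℕ) (hn : 1 ≤ n) (A u : Fin n → Fin n → ℝ) (Z : Fin n → ℝ)
    (s₁ s₂ : ℝ) (hs₁ : 0 < s₁) (hs₁₂ : s₁ < s₂)
    (hno : ∀ i : Fin n, |∑ k, u i k * Z k| ∉ Set.Ioo s₁ s₂) :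
    ∃ a b c : ℝ, ∀ s ∈ Set.Ioo s₁ s₂, slin n s A u Z = a / s ^ 2 + b / s + c := by
  have hch : ∀ i : Fin n, ∃ p q : ℝ, ∀ s ∈ Set.Ioo s₁ s₂,
      phi s (∑ k, u i k * Z k) = p / s + q :=
    fun i => phi_affine s₁ s₂ _ hs₁ hs₁₂ (hno i)
  choose p q hpq using hch
  refine ⟨∑ i, ∑ j, A i j * p i * p j,
    ∑ i, ∑ j, A i j * (p i * q j + q i * p j),
    ∑ i, ∑ j, A i j * (q i * q j), fun s hs => ?_⟩
  have hs0 : s ≠ 0 := ne_of_gt (hs₁.trans hs.1)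
  unfold slin
  rw [Finset.sum_div, Finset.sum_div, ← Finset.sum_add_distrib, ← Finset.sum_add_distrib]
  refine Finset.sum_congr rfl fun i _ => ?_
  rw [Finset.sum_div, Finset.sum_div, ← Finset.sum_add_distrib, ← Finset.sum_add_distrib]
  refine Finset.sum_congr rfl fun j _ => ?_
  rw [hpq i s hs, hpq j s hs]
  field_simp
  ring
end

section
/- There exists a universal constant C > 0 such that for every n ≥ 2 and m ≥ 1 the following holds. Suppose there are m triples (A^{(k)}, u^{(k)}, Z^{(k)}) for k = 1, …, m, where each A^{(k)} is an n×n real matrix, u^{(k)} = (u^{(k)}_1, …, u^{(k)}_n) is a tuple of vectors in ℝ^n, and Z^{(k)} ∈ ℝ^n, together with witnesses r_1, …, r_m ∈ ℝ, such that for every subset T ⊆ {1, …, m} there exists s_T > 0 with slin_{s_T}(A^{(k)}, u^{(k)}, Z^{(k)}) > r_k if and only if k ∈ T. Then m ≤ C · log n. (That is, the pseudo-dimension of the class of functions {(A,u,Z) ↦ slin_s(A,u,Z) : s > 0} on size-n instances is O(log n).) -/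
open Finset Polynomial


/-- Sign-change points of a quadratic: a set of ≤ 2 points such that any sign
alternation of `a x² + b x + c` brackets one of them. -/
lemma quad_alt (a b c : ℝ) : ∃ P : Finset ℝ, P.card ≤ 2 ∧
    ∀ x x' : ℝ, x ≤ x' → ¬((0 < a*x^2+b*x+c) ↔ (0 < a*x'^2+b*x'+c)) →
      ∃ p ∈ P, x ≤ p ∧ p ≤ x' := by
  by_cases h0 : a = 0 ∧ b = 0 ∧ c = 0
  · refine ⟨∅, by simp, fun x x' _ hne => ?_⟩
    exact absurd (by rw [h0.1, h0.2.1, h0.2.2]; norm_num) hne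
  · set pol : ℝ[X] := C a * X ^ 2 + C b * X + C c with hpol
    have hpolne : pol ≠ 0 := by
      intro h
      apply h0
      refine ⟨?_, ?_, ?_⟩
      · have := congrArg (fun q : ℝ[X] => q.coeff 2) h
        simpa [hpol, coeff_C] using this
      · have := congrArg (fun q : ℝ[X] => q.coeff 1) h
        simpa [hpol, coeff_C] using this
      · have := congrArg (fun q : ℝ[X] => q.coeff 0) h
        simpa [hpol, coeff_C] using this
    refine ⟨pol.roots.toFinset, ?_, ?_⟩
    · calc pol.roots.toFinset.card ≤ Multiset.card pol.roots := Multiset.toFinset_card_le _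
        _ ≤ pol.natDegree := Polynomial.card_roots' pol
        _ ≤ 2 := Polynomial.natDegree_quadratic_le
    · intro x x' hxx' hne
      have hcont : ContinuousOn (fun t : ℝ => a*t^2+b*t+c) (Set.Icc x x') := by fun_prop
      have heval : ∀ t : ℝ, pol.eval t = a*t^2+b*t+c := by intro t; simp [hpol]
      have key : ∃ p ∈ Set.Icc x x', a*p^2+b*p+c = 0 := by
        by_cases h1 : 0 < a*x^2+b*x+c
        · have h2 : a*x'^2+b*x'+c ≤ 0 := by
            by_contra h2; exact hne ⟨fun _ => lt_of_not_ge h2, fun _ => h1⟩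
          have : (0:ℝ) ∈ Set.Icc (a*x'^2+b*x'+c) (a*x^2+b*x+c) := ⟨h2, le_of_lt h1⟩
          obtain ⟨p, hp, hp0⟩ := intermediate_value_Icc' hxx' hcont this
          exact ⟨p, hp, hp0⟩
        · have h2 : 0 < a*x'^2+b*x'+c := by
            by_contra h2; exact hne ⟨fun h => absurd h h1, fun h => absurd h h2⟩
          have : (0:ℝ) ∈ Set.Icc (a*x^2+b*x+c) (a*x'^2+b*x'+c) := ⟨le_of_not_gt h1, le_of_lt h2⟩
          obtain ⟨p, hp, hp0⟩ := intermediate_value_Icc hxx' hcont this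
          exact ⟨p, hp, hp0⟩
      obtain ⟨p, hp, hp0⟩ := key
      refine ⟨p, ?_, hp.1, hp.2⟩
      rw [Multiset.mem_toFinset, Polynomial.mem_roots hpolne]
      exact show pol.IsRoot p by rw [Polynomial.IsRoot, heval]; exact hp0

noncomputable def pc (e y : ℝ) : ℝ := if |y| ≤ e then y else 0
noncomputable def qc (e y : ℝ) : ℝ := if |y| ≤ e then 0 else if 0 < y then 1 else -1

noncomputable def avf (n : ℕ) (A : Fin n → Fin n → ℝ) (y : Fin n → ℝ) (r e : ℝ) : ℝ :=
  (∑ i, ∑ j, A i j * qc e (y i) * qc e (y j)) - r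
noncomputable def bvf (n : ℕ) (A : Fin n → Fin n → ℝ) (y : Fin n → ℝ) (e : ℝ) : ℝ :=
  ∑ i, ∑ j, A i j * (pc e (y i) * qc e (y j) + qc e (y i) * pc e (y j))
noncomputable def cvf (n : ℕ) (A : Fin n → Fin n → ℝ) (y : Fin n → ℝ) (e : ℝ) : ℝ :=
  ∑ i, ∑ j, A i j * pc e (y i) * pc e (y j)

lemma phi_mul_eq (s e y : ℝ) (hs : 0 < s) (hes : e ≤ s) (himp : |y| ≤ s → |y| ≤ e) :
    phi s y * s = pc e y + qc e y * s := by
  unfold phi pc qc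
  by_cases h : |y| ≤ s
  · have he' : |y| ≤ e := himp h
    obtain ⟨h1, h2⟩ := abs_le.1 h
    rw [if_pos he', if_pos he', if_neg (not_lt.2 h1), if_pos h2]
    field_simp
    ring
  · have he' : ¬ |y| ≤ e := fun hc => h (le_trans hc hes)
    rw [if_neg he', if_neg he']
    by_cases hy : 0 < y
    · have : s < y := by rw [abs_of_pos hy] at h; linarith [not_le.1 h]
      rw [if_neg (by linarith), if_neg (by linarith), if_pos hy]
      ring
    · have hy' : y ≤ 0 := le_of_not_gt hy
      have : y < -s := by rw [abs_of_nonpos hy'] at h; linarith [not_le.1 h]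
      rw [if_pos this, if_neg hy]
      ring

lemma expand_sum {n : ℕ} (A : Fin n → Fin n → ℝ) (P Q : Fin n → ℝ) (s : ℝ) :
    ∑ i, ∑ j, A i j * (P i + Q i * s) * (P j + Q j * s)
      = (∑ i, ∑ j, A i j * Q i * Q j) * s^2 + (∑ i, ∑ j, A i j * (P i * Q j + Q i * P j)) * s
        + (∑ i, ∑ j, A i j * P i * P j) := by
  rw [Finset.sum_mul, Finset.sum_mul, ← Finset.sum_add_distrib, ← Finset.sum_add_distrib]
  refine Finset.sum_congr rfl fun i _ => ?_
  rw [Finset.sum_mul, Finset.sum_mul, ← Finset.sum_add_distrib, ← Finset.sum_add_distrib]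
  refine Finset.sum_congr rfl fun j _ => ?_
  ring

lemma slin_eval (n : ℕ) (A u : Fin n → Fin n → ℝ) (Z : Fin n → ℝ) (r : ℝ)
    (y : Fin n → ℝ) (hy : ∀ i, y i = ∑ k, u i k * Z k)
    (e s : ℝ) (hs : 0 < s) (hes : e ≤ s) (hmax : ∀ i, |y i| ≤ s → |y i| ≤ e) :
    (r < slin n s A u Z ↔
      0 < avf n A y r e * s^2 + bvf n A y e * s + cvf n A y e) := by
  have main : slin n s A u Z * s^2
      = (∑ i, ∑ j, A i j * qc e (y i) * qc e (y j)) * s^2 + bvf n A y e * s + cvf n A y e := by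
    have step1 : slin n s A u Z * s^2
        = ∑ i, ∑ j, A i j * (pc e (y i) + qc e (y i)*s) * (pc e (y j) + qc e (y j)*s) := by
      rw [slin, Finset.sum_mul]
      refine Finset.sum_congr rfl fun i _ => ?_
      rw [Finset.sum_mul]
      refine Finset.sum_congr rfl fun j _ => ?_
      rw [← phi_mul_eq s e (y i) hs hes (hmax i), ← phi_mul_eq s e (y j) hs hes (hmax j), hy i, hy j]
      ring
    rw [step1, expand_sum]
    rfl
  have key2 : avf n A y r e * s^2 + bvf n A y e * s + cvf n A y e
      = (slin n s A u Z - r) * s^2 := by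
    rw [avf, sub_mul, sub_mul, main]; ring
  rw [key2]
  have hs2 : 0 < s^2 := by positivity
  constructor
  · intro h; exact mul_pos (sub_pos.2 h) hs2
  · intro h
    by_contra hc
    push_neg at hc
    nlinarith

lemma exists_alt_set (n : ℕ) (A u : Fin n → Fin n → ℝ) (Z : Fin n → ℝ) (r : ℝ) :
    ∃ P : Finset ℝ, P.card ≤ 3*n+3 ∧
    ∀ x x' : ℝ, 0 < x → x ≤ x' → ¬((r < slin n x A u Z) ↔ (r < slin n x' A u Z)) →
      ∃ p ∈ P, x ≤ p ∧ p ≤ x' := by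
  classical
  set y : Fin n → ℝ := fun i => ∑ k, u i k * Z k with hy
  set E : Finset ℝ := insert 0 (Finset.image (fun i => |y i|) Finset.univ) with hE
  choose g hgcard hgalt using fun e => quad_alt (avf n A y r e) (bvf n A y e) (cvf n A y e)
  refine ⟨E ∪ E.biUnion g, ?_, ?_⟩
  · have hEcard : E.card ≤ n + 1 := by
      calc E.card ≤ (Finset.image (fun i => |y i|) Finset.univ).card + 1 :=
            Finset.card_insert_le _ _
        _ ≤ n + 1 := by
            have := Finset.card_image_le (s := (Finset.univ : Finset (Fin n)))
              (f := fun i => |y i|)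
            simpa using Nat.add_le_add_right (by simpa using this) 1
    calc (E ∪ E.biUnion g).card ≤ E.card + (E.biUnion g).card := Finset.card_union_le _ _
      _ ≤ E.card + ∑ e ∈ E, (g e).card := by
          exact Nat.add_le_add_left (Finset.card_biUnion_le) _
      _ ≤ E.card + ∑ _e ∈ E, 2 := by
          exact Nat.add_le_add_left (Finset.sum_le_sum fun e _ => hgcard e) _
      _ = E.card + 2 * E.card := by rw [Finset.sum_const, smul_eq_mul, mul_comm]
      _ ≤ (n+1) + 2 * (n+1) := by omega
      _ = 3*n+3 := by ring
  · intro x x' hx hxx' hne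
    by_cases hzex : ∃ z ∈ E, x ≤ z ∧ z ≤ x'
    · obtain ⟨z, hzE, h1, h2⟩ := hzex
      exact ⟨z, Finset.mem_union_left _ hzE, h1, h2⟩
    push_neg at hzex
    have h0E : (0:ℝ) ∈ E := Finset.mem_insert_self _ _
    have hQne : ((E.filter (· ≤ x))).Nonempty :=
      ⟨0, Finset.mem_filter.2 ⟨h0E, le_of_lt hx⟩⟩
    set e := (E.filter (· ≤ x)).max' hQne with he
    have heQ : e ∈ E.filter (· ≤ x) := Finset.max'_mem _ _
    have heE : e ∈ E := (Finset.mem_filter.1 heQ).1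
    have hex : e ≤ x := (Finset.mem_filter.1 heQ).2
    have hyiE : ∀ i, |y i| ∈ E := fun i =>
      Finset.mem_insert_of_mem (Finset.mem_image_of_mem _ (Finset.mem_univ i))
    have hmaxx : ∀ i, |y i| ≤ x → |y i| ≤ e := by
      intro i h
      exact Finset.le_max' (E.filter (· ≤ x)) (|y i|) (Finset.mem_filter.2 ⟨hyiE i, h⟩)
    have hmaxx' : ∀ i, |y i| ≤ x' → |y i| ≤ e := by
      intro i h
      refine hmaxx i ?_
      by_contra hc
      push_neg at hc
      exact absurd h (not_le.2 (hzex _ (hyiE i) (le_of_lt hc)))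
    have h1 := slin_eval n A u Z r y (fun i => rfl) e x hx hex hmaxx
    have h2 := slin_eval n A u Z r y (fun i => rfl) e x' (lt_of_lt_of_le hx hxx')
      (le_trans hex hxx') hmaxx'
    rw [h1, h2] at hne
    obtain ⟨p, hp, h3, h4⟩ := hgalt e x x' hxx' hne
    exact ⟨p, Finset.mem_union_right _ (Finset.mem_biUnion.2 ⟨e, heE, hp⟩), h3, h4⟩

theorem stmt_3 :
    ∃ C : ℝ, 0 < C ∧
      ∀ (n m : ℕ), 2 ≤ n → 1 ≤ m →
      ∀ (A u : Fin m → Fin n → Fin n → ℝ) (Z : Fin m → Fin n → ℝ) (r : Fin m → ℝ),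
        (∀ T : Finset (Fin m), ∃ s : ℝ, 0 < s ∧
          ∀ k : Fin m, (r k < slin n s (A k) (u k) (Z k) ↔ k ∈ T)) →
        (m : ℝ) ≤ C * Real.log n := by
  classical
  refine ⟨64, by norm_num, ?_⟩
  intro n m hn hm A u Z r hshatter
  choose sw hswpos hswiff using hshatter
  choose P hPcard hPalt using fun k => exists_alt_set n (A k) (u k) (Z k) (r k)
  have hswinj : Function.Injective sw := by
    intro T T' hTT'
    ext k
    rw [← hswiff T k, hTT', hswiff T' k]
  set N := 2 ^ m with hN
  set S : Finset ℝ := Finset.image sw Finset.univ with hS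
  have hScard : S.card = N := by
    rw [hS, Finset.card_image_of_injective _ hswinj, Finset.card_univ, Fintype.card_finset,
      Fintype.card_fin]
  set L : ℕ → ℝ := fun i => if h : i < N then S.orderEmbOfFin hScard ⟨i, h⟩ else 0 with hL
  have hLmem : ∀ i, i < N → ∃ T, L i = sw T := by
    intro i h
    have hmem : L i ∈ S := by
      rw [hL]; dsimp only; rw [dif_pos h]; exact Finset.orderEmbOfFin_mem _ _ _
    obtain ⟨T, _, hT⟩ := Finset.mem_image.1 hmem
    exact ⟨T, hT.symm⟩
  have hLpos : ∀ i, i < N → 0 < L i := by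
    intro i h; obtain ⟨T, hT⟩ := hLmem i h; rw [hT]; exact hswpos T
  have hLmono : ∀ i j, i < j → j < N → L i < L j := by
    intro i j hij hj
    have hi : i < N := lt_trans hij hj
    rw [hL]; dsimp only; rw [dif_pos hi, dif_pos hj]
    exact (S.orderEmbOfFin hScard).strictMono (show (⟨i, hi⟩ : Fin N) < ⟨j, hj⟩ from hij)
  have hN2 : 2 ≤ N := by
    rw [hN]
    calc 2 = 2^1 := (pow_one 2).symm
      _ ≤ 2^m := Nat.pow_le_pow_right (by norm_num) hm
  -- Step A: consecutive patterns differ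
  have stepA : ∀ i ∈ Finset.range (N-1), ∃ k : Fin m,
      ¬ (r k < slin n (L i) (A k) (u k) (Z k) ↔ r k < slin n (L (i+1)) (A k) (u k) (Z k)) := by
    intro i hi
    rw [Finset.mem_range] at hi
    have hi1 : i + 1 < N := by omega
    have hi0 : i < N := by omega
    obtain ⟨T, hT⟩ := hLmem i hi0
    obtain ⟨T', hT'⟩ := hLmem (i+1) hi1
    by_contra hc
    push_neg at hc
    have hTT' : T = T' := by
      ext k
      rw [← hswiff T k, ← hT, hc k, hT', hswiff T' k]
    have hlt := hLmono i (i+1) (by omega) hi1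
    rw [hT, hT', hTT'] at hlt
    exact lt_irrefl _ hlt
  -- Step B: per-coordinate alternation count
  have stepB : ∀ k : Fin m, ((Finset.range (N-1)).filter (fun i =>
      ¬ (r k < slin n (L i) (A k) (u k) (Z k) ↔
         r k < slin n (L (i+1)) (A k) (u k) (Z k)))).card ≤ 2 * (3*n+3) := by
    intro k
    set filt := (Finset.range (N-1)).filter (fun i =>
      ¬ (r k < slin n (L i) (A k) (u k) (Z k) ↔
         r k < slin n (L (i+1)) (A k) (u k) (Z k))) with hfilt
    have hch : ∀ i ∈ filt, ∃ p ∈ P k, L i ≤ p ∧ p ≤ L (i+1) := by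
      intro i hi
      rw [hfilt, Finset.mem_filter, Finset.mem_range] at hi
      exact hPalt k (L i) (L (i+1)) (hLpos i (by omega))
        (le_of_lt (hLmono i (i+1) (by omega) (by omega))) hi.2
    set f : ℕ → ℝ := fun i =>
      if h : ∃ p ∈ P k, L i ≤ p ∧ p ≤ L (i+1) then h.choose else 0 with hf
    have hfspec : ∀ i ∈ filt, f i ∈ P k ∧ L i ≤ f i ∧ f i ≤ L (i+1) := by
      intro i hi
      have h := hch i hi
      rw [hf]; dsimp only; rw [dif_pos h]
      obtain ⟨h1, h2, h3⟩ := h.choose_spec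
      exact ⟨h1, h2, h3⟩
    have hfiber : ∀ p ∈ P k, (filt.filter (fun i => f i = p)).card ≤ 2 := by
      intro p _
      set Fb := filt.filter (fun i => f i = p) with hFb
      have hkey : ∀ i ∈ Fb, ∀ j ∈ Fb, i < j → j = i + 1 := by
        intro i hi j hj hij
        by_contra hne
        have hj1 : i + 1 < j := by omega
        rw [hFb, Finset.mem_filter] at hi hj
        have hiP := hfspec i hi.1
        have hjP := hfspec j hj.1
        have hjN : j < N := by
          have := hj.1
          rw [hfilt, Finset.mem_filter, Finset.mem_range] at this
          omega
        have hlt : L (i+1) < L j := hLmono _ _ hj1 hjN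
        have h1 : p ≤ L (i+1) := by rw [← hi.2]; exact hiP.2.2
        have h2 : L j ≤ p := by rw [← hj.2]; exact hjP.2.1
        linarith
      rcases Fb.eq_empty_or_nonempty with hFbe | hFbne
      · rw [hFbe]; simp
      · have hsub : Fb ⊆ {Fb.min' hFbne, Fb.min' hFbne + 1} := by
          intro j hj
          have h1 : Fb.min' hFbne ≤ j := Finset.min'_le _ _ hj
          rcases eq_or_lt_of_le h1 with h | h
          · simp [← h]
          · have := hkey _ (Finset.min'_mem _ _) j hj h
            simp [this]
        calc Fb.card ≤ ({Fb.min' hFbne, Fb.min' hFbne + 1} : Finset ℕ).card :=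
              Finset.card_le_card hsub
          _ ≤ 2 := by
              refine le_trans (Finset.card_insert_le _ _) ?_
              simp
    calc filt.card ≤ 2 * (P k).card :=
          Finset.card_le_mul_card_image_of_maps_to (fun i hi => (hfspec i hi).1) 2 hfiber
      _ ≤ 2 * (3*n+3) := Nat.mul_le_mul_left _ (hPcard k)
  -- Step C
  have stepC : N - 1 ≤ m * (2*(3*n+3)) := by
    have hsub : Finset.range (N-1) ⊆ Finset.univ.biUnion (fun k : Fin m =>
        (Finset.range (N-1)).filter (fun i =>
          ¬ (r k < slin n (L i) (A k) (u k) (Z k) ↔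
             r k < slin n (L (i+1)) (A k) (u k) (Z k)))) := by
      intro i hi
      obtain ⟨k, hk⟩ := stepA i hi
      exact Finset.mem_biUnion.2 ⟨k, Finset.mem_univ _, Finset.mem_filter.2 ⟨hi, hk⟩⟩
    calc N - 1 = (Finset.range (N-1)).card := (Finset.card_range _).symm
      _ ≤ _ := Finset.card_le_card hsub
      _ ≤ ∑ k : Fin m, ((Finset.range (N-1)).filter (fun i =>
            ¬ (r k < slin n (L i) (A k) (u k) (Z k) ↔
               r k < slin n (L (i+1)) (A k) (u k) (Z k)))).card := Finset.card_biUnion_le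
      _ ≤ ∑ _k : Fin m, 2*(3*n+3) := Finset.sum_le_sum (fun k _ => stepB k)
      _ = m * (2*(3*n+3)) := by
          rw [Finset.sum_const, Finset.card_univ, Fintype.card_fin, smul_eq_mul]
  -- numeric part
  have bound1 : 2^m ≤ m * (6*n+6) + 1 := by
    have : N ≤ m * (2*(3*n+3)) + 1 := by omega
    calc 2^m = N := hN
      _ ≤ m * (2*(3*n+3)) + 1 := this
      _ = m * (6*n+6) + 1 := by ring
  set h := m / 2 with hh
  have hm2 : 2*h ≤ m ∧ m ≤ 2*h+1 := by omega
  have pow1 : 2^(2*h) ≤ 2^m := Nat.pow_le_pow_right (by norm_num) hm2.1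
  have hhh : h < 2^h := Nat.lt_two_pow_self
  have ht1 : 1 ≤ 2^h := Nat.one_le_two_pow
  have e1 : 2^(2*h) = 2^h * 2^h := by rw [two_mul, pow_add]
  have tbound : 2^h ≤ 18*n+19 := by
    by_contra hc
    push_neg at hc
    have A1 : 2^h * 2^h ≤ m * (6*n+6) + 1 := by rw [← e1]; exact le_trans pow1 bound1
    nlinarith [hm2.2, hhh, hc, ht1, hn]
  have tbound2 : 2^h ≤ 28*n := by omega
  -- go to ℝ
  have tcast : ((2:ℝ))^h ≤ 28*(n:ℝ) := by exact_mod_cast tbound2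
  have hnpos : (0:ℝ) < n := by positivity
  have hlog1 : (h:ℝ) * Real.log 2 ≤ Real.log (28*(n:ℝ)) := by
    rw [← Real.log_pow]
    exact Real.log_le_log (by positivity) tcast
  have hlog2 : Real.log (28*(n:ℝ)) ≤ Real.log (32*(n:ℝ)) :=
    Real.log_le_log (by positivity) (by linarith)
  have hlog3 : Real.log (32*(n:ℝ)) = 5 * Real.log 2 + Real.log n := by
    rw [Real.log_mul (by norm_num) (ne_of_gt hnpos)]
    congr 1
    rw [show (32:ℝ) = 2^5 by norm_num, Real.log_pow]
    push_cast; ring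
  have hLn : Real.log 2 ≤ Real.log n :=
    Real.log_le_log (by norm_num) (by exact_mod_cast hn)
  have hlog2pos : (0.6931:ℝ) < Real.log 2 := by
    have := Real.log_two_gt_d9
    linarith
  have hmain : (m:ℝ) * Real.log 2 ≤ 13 * Real.log n := by
    have h1 : (h:ℝ) * Real.log 2 ≤ 5 * Real.log 2 + Real.log n := by
      rw [← hlog3]; exact le_trans hlog1 hlog2
    have h2 : (m:ℝ) ≤ 2*(h:ℝ)+1 := by exact_mod_cast hm2.2
    nlinarith [hLn, hlog2pos]
  nlinarith [hmain, hlog2pos, hLn]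
end

section
/- There exists a constant c > 0 such that for every sufficiently large n there exist a natural number m with m ≥ c · log n, an n×n real symmetric matrix A with nonnegative entries and zero diagonal, unit vectors u_1, …, u_n ∈ ℝ^n, vectors Z^{(1)}, …, Z^{(m)} ∈ ℝ^n, and witnesses r_1, …, r_m ∈ ℝ, such that for every subset T ⊆ {1, …, m} there exists s_T > 0 with slin_{s_T}(A, u, Z^{(j)}) > r_j if and only if j ∈ T. (That is, the pseudo-dimension of the class of functions {(A,u,Z) ↦ slin_s(A,u,Z) : s > 0} on size-n instances is Ω(log n).) -/
open Finset

lemma phi_neg (s t : ℝ) (hs : 0 < s) : phi s (-t) = -(phi s t) := by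
  unfold phi
  split_ifs <;> first | (exfalso; linarith) | ring

lemma phi_zero (s : ℝ) (hs : 0 < s) : phi s 0 = 0 := by
  unfold phi
  split_ifs <;> first | (exfalso; linarith) | simp

lemma phi_one (s t : ℝ) (hs : 0 < s) (h : s ≤ t) : phi s t = 1 := by
  unfold phi
  split_ifs with h1 h2
  · exfalso; linarith
  · have : t = s := le_antisymm h2 h
    rw [this, div_self hs.ne']
  · rfl

lemma phi_div (s t : ℝ) (hs : 0 < s) (h0 : 0 ≤ t) (h : t ≤ s) : phi s t = t / s := by
  unfold phi
  split_ifs with h1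
  · exfalso; linarith
  · rfl

lemma sum_pair (x : ℕ → ℝ) (n : ℕ) :
    ∑ i ∈ range n, ∑ j ∈ range n,
      (if (j = i+1 ∧ i % 2 = 0) ∨ (i = j+1 ∧ j % 2 = 0) then (1:ℝ) else 0) * x i * x j
    = 2 * ∑ q ∈ range (n/2), x (2*q) * x (2*q+1) := by
  induction n with
  | zero => simp
  | succ n ih =>
    have expand : ∑ i ∈ range (n+1), ∑ j ∈ range (n+1),
        (if (j = i+1 ∧ i % 2 = 0) ∨ (i = j+1 ∧ j % 2 = 0) then (1:ℝ) else 0) * x i * x j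
        = (∑ i ∈ range n, ∑ j ∈ range n,
            (if (j = i+1 ∧ i % 2 = 0) ∨ (i = j+1 ∧ j % 2 = 0) then (1:ℝ) else 0) * x i * x j)
          + (∑ i ∈ range n,
            (if (n = i+1 ∧ i % 2 = 0) ∨ (i = n+1 ∧ n % 2 = 0) then (1:ℝ) else 0) * x i * x n)
          + (∑ j ∈ range n,
            (if (j = n+1 ∧ n % 2 = 0) ∨ (n = j+1 ∧ j % 2 = 0) then (1:ℝ) else 0) * x n * x j)
          + (if (n = n+1 ∧ n % 2 = 0) ∨ (n = n+1 ∧ n % 2 = 0) then (1:ℝ) else 0) * x n * x n := by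
      simp only [Finset.sum_range_succ, Finset.sum_add_distrib]
      ring
    rw [expand]
    have hcorner : (if (n = n+1 ∧ n % 2 = 0) ∨ (n = n+1 ∧ n % 2 = 0) then (1:ℝ) else 0) = 0 := by
      rw [if_neg]; omega
    rcases Nat.even_or_odd n with he | ho
    · have h2 : n % 2 = 0 := Nat.even_iff.mp he
      have hrow : ∀ i ∈ range n,
          (if (n = i+1 ∧ i % 2 = 0) ∨ (i = n+1 ∧ n % 2 = 0) then (1:ℝ) else 0) * x i * x n = 0 := by
        intro i hi
        rw [mem_range] at hi
        rw [if_neg (by omega)]; ring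
      have hcol : ∀ j ∈ range n,
          (if (j = n+1 ∧ n % 2 = 0) ∨ (n = j+1 ∧ j % 2 = 0) then (1:ℝ) else 0) * x n * x j = 0 := by
        intro j hj
        rw [mem_range] at hj
        rw [if_neg (by omega)]; ring
      rw [Finset.sum_congr rfl hrow, Finset.sum_congr rfl hcol, hcorner]
      have : (n+1)/2 = n/2 := by omega
      rw [this, ih]
      simp
    · have h2 : n % 2 = 1 := Nat.odd_iff.mp ho
      have hn1 : 1 ≤ n := by omega
      have hrow : ∑ i ∈ range n,
          (if (n = i+1 ∧ i % 2 = 0) ∨ (i = n+1 ∧ n % 2 = 0) then (1:ℝ) else 0) * x i * x n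
          = x (n-1) * x n := by
        rw [Finset.sum_eq_single_of_mem (n-1) (mem_range.mpr (by omega))]
        · rw [if_pos (by omega)]; ring
        · intro i hi hne
          rw [mem_range] at hi
          rw [if_neg (by omega)]; ring
      have hcol : ∑ j ∈ range n,
          (if (j = n+1 ∧ n % 2 = 0) ∨ (n = j+1 ∧ j % 2 = 0) then (1:ℝ) else 0) * x n * x j
          = x (n-1) * x n := by
        rw [Finset.sum_eq_single_of_mem (n-1) (mem_range.mpr (by omega))]
        · rw [if_pos (by omega)]; ring
        · intro j hj hne
          rw [mem_range] at hj
          rw [if_neg (by omega)]; ring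
      rw [hrow, hcol, hcorner, ih]
      have hq : (n+1)/2 = n/2 + 1 := by omega
      rw [hq, Finset.sum_range_succ]
      have e1 : 2*(n/2) = n - 1 := by omega
      have e3 : n - 1 + 1 = n := by omega
      rw [e1, e3]
      ring

lemma sum_range_two_pow (j : ℕ) : ∑ k ∈ range j, 2^k = 2^j - 1 := by
  induction j with
  | zero => simp
  | succ j ih =>
    rw [Finset.sum_range_succ, ih]
    have : 1 ≤ 2^j := Nat.one_le_two_pow
    have : 2^(j+1) = 2 * 2^j := by ring
    omega

lemma bit_sum (T : Finset ℕ) (j : ℕ) :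
    ((∑ i ∈ T, 2^i) / 2^j) % 2 = if j ∈ T then 1 else 0 := by
  have hsplit : ∑ i ∈ T, 2^i
      = (∑ i ∈ T.filter (· < j), 2^i) + ∑ i ∈ T.filter (fun i => ¬ i < j), 2^i :=
    (Finset.sum_filter_add_sum_filter_not T _ _).symm
  have hB : ∑ i ∈ T.filter (fun i => ¬ i < j), 2^i
      = 2^j * ∑ i ∈ T.filter (fun i => ¬ i < j), 2^(i-j) := by
    rw [Finset.mul_sum]
    refine Finset.sum_congr rfl (fun i hi => ?_)
    rw [Finset.mem_filter] at hi
    rw [← pow_add]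
    congr 1
    omega
  have hA : (∑ i ∈ T.filter (· < j), 2^i) < 2^j := by
    have hsub : T.filter (· < j) ⊆ range j := by
      intro i hi
      rw [Finset.mem_filter] at hi
      exact mem_range.mpr hi.2
    calc (∑ i ∈ T.filter (· < j), 2^i) ≤ ∑ i ∈ range j, 2^i :=
          Finset.sum_le_sum_of_subset hsub
      _ = 2^j - 1 := sum_range_two_pow j
      _ < 2^j := by have : 1 ≤ 2^j := Nat.one_le_two_pow; omega
  rw [hsplit, hB, Nat.add_mul_div_left _ _ (by positivity : 0 < 2^j),
    Nat.div_eq_of_lt hA, Nat.zero_add]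
  -- now compute (∑ i ∈ T.filter (fun i => ¬ i < j), 2^(i-j)) % 2
  set S := T.filter (fun i => ¬ i < j) with hS
  have hsplit2 : ∑ i ∈ S, 2^(i-j)
      = (∑ i ∈ S.filter (· = j), 2^(i-j)) + ∑ i ∈ S.filter (fun i => ¬ i = j), 2^(i-j) :=
    (Finset.sum_filter_add_sum_filter_not S _ _).symm
  have hjS : j ∈ S ↔ j ∈ T := by
    rw [hS, Finset.mem_filter]
    constructor
    · exact fun h => h.1
    · exact fun h => ⟨h, by omega⟩
  have h1 : (∑ i ∈ S.filter (· = j), 2^(i-j)) = if j ∈ T then 1 else 0 := by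
    rw [Finset.filter_eq' S j]
    by_cases hj : j ∈ T
    · rw [if_pos (hjS.mpr hj), if_pos hj, Finset.sum_singleton, Nat.sub_self, pow_zero]
    · rw [if_neg (fun h => hj (hjS.mp h)), if_neg hj, Finset.sum_empty]
  have h2 : 2 ∣ ∑ i ∈ S.filter (fun i => ¬ i = j), 2^(i-j) := by
    refine Finset.dvd_sum (fun i hi => ?_)
    rw [Finset.mem_filter, hS, Finset.mem_filter] at hi
    exact dvd_pow_self 2 (by omega)
  rw [hsplit2, h1]
  obtain ⟨k, hk⟩ := h2
  rw [hk]
  split_ifs <;> omega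

def bitn (j q : ℕ) : ℕ := q / 2^j % 2

noncomputable def eps (m j q : ℕ) : ℝ :=
  if q < 2^m then ((bitn j q : ℝ) - (bitn j (q-1) : ℝ)) else 0

noncomputable def tq (q : ℕ) : ℝ := (1/4:ℝ)^q

noncomputable def Xf (m j v : ℕ) : ℝ :=
  if v % 2 = 0 then |eps m j (v/2)| * tq (v/2) else eps m j (v/2) * tq (v/2)

lemma bitn_lt (j q : ℕ) : bitn j q = 0 ∨ bitn j q = 1 := by
  unfold bitn; omega

lemma eps_cases (m j q : ℕ) : eps m j q = -1 ∨ eps m j q = 0 ∨ eps m j q = 1 := by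
  unfold eps
  split_ifs
  · rcases bitn_lt j q with h1 | h1 <;> rcases bitn_lt j (q-1) with h2 | h2 <;>
      rw [h1, h2] <;> norm_num
  · right; left; rfl

lemma pairprod (m j q : ℕ) (s : ℝ) (hs : 0 < s) :
    phi s (Xf m j (2*q)) * phi s (Xf m j (2*q+1)) = eps m j q * (phi s (tq q))^2 := by
  have h1 : (2*q) % 2 = 0 := by omega
  have h2 : (2*q) / 2 = q := by omega
  have h3 : (2*q+1) % 2 = 1 := by omega
  have h4 : (2*q+1) / 2 = q := by omega
  unfold Xf
  rw [h1, h2, h3, h4]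
  norm_num
  rcases eps_cases m j q with h | h | h <;> rw [h]
  · norm_num
    rw [phi_neg _ _ hs]
    ring
  · norm_num [phi_zero s hs]
  · norm_num
    ring

lemma tq_pos (q : ℕ) : 0 < tq q := by unfold tq; positivity

lemma tq_mono {q p : ℕ} (h : q ≤ p) : tq p ≤ tq q :=
  pow_le_pow_of_le_one (by norm_num) (by norm_num) h

lemma tq_sq (a : ℕ) : (tq a)^2 = (1/16:ℝ)^a := by
  unfold tq
  rw [← pow_mul, mul_comm, pow_mul]
  norm_num

lemma main_value (m j p n2 : ℕ) (hp : p < 2^m) (hn2 : 2^m ≤ n2) :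
    ∃ E : ℝ, |E| ≤ 1/8 ∧
      ∑ q ∈ range n2, eps m j q * (phi (tq p) (tq q))^2 = (bitn j p : ℝ) + E := by
  have hs : 0 < tq p := tq_pos p
  set s := tq p with hsdef
  have hrestrict : ∑ q ∈ range (2^m), eps m j q * (phi s (tq q))^2
      = ∑ q ∈ range n2, eps m j q * (phi s (tq q))^2 := by
    refine Finset.sum_subset (Finset.range_subset_range.mpr hn2) (fun q _ hq => ?_)
    rw [mem_range] at hq
    unfold eps
    rw [if_neg (by omega)]
    ring
  rw [← hrestrict]
  have hsplit : ∑ q ∈ range (2^m), eps m j q * (phi s (tq q))^2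
      = (∑ q ∈ range (p+1), eps m j q * (phi s (tq q))^2)
        + ∑ q ∈ Ico (p+1) (2^m), eps m j q * (phi s (tq q))^2 := by
    simp only [Finset.range_eq_Ico]
    rw [Finset.sum_Ico_consecutive _ (Nat.zero_le (p+1)) hp]
  have hpart1 : ∑ q ∈ range (p+1), eps m j q * (phi s (tq q))^2 = (bitn j p : ℝ) := by
    have h1 : ∀ q ∈ range (p+1), eps m j q * (phi s (tq q))^2 = eps m j q := by
      intro q hq
      rw [mem_range] at hq
      rw [phi_one s (tq q) hs (tq_mono (by omega))]
      ring
    rw [Finset.sum_congr rfl h1, Finset.sum_range_succ']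
    have h0 : eps m j 0 = 0 := by
      unfold eps bitn
      norm_num
    have h2 : ∀ i ∈ range p, eps m j (i+1) = (bitn j (i+1) : ℝ) - (bitn j i : ℝ) := by
      intro i hi
      rw [mem_range] at hi
      unfold eps
      rw [if_pos (by omega)]
      simp
    rw [Finset.sum_congr rfl h2, Finset.sum_range_sub (fun i => (bitn j i : ℝ)), h0]
    have : bitn j 0 = 0 := by unfold bitn; simp
    rw [this]
    simp
  refine ⟨∑ q ∈ Ico (p+1) (2^m), eps m j q * (phi s (tq q))^2, ?_, by rw [hsplit, hpart1]⟩
  -- bound the error term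
  have habs : ∀ q ∈ Ico (p+1) (2^m), |eps m j q * (phi s (tq q))^2| ≤ (1/16:ℝ)^q / (1/16)^p := by
    intro q hq
    rw [Finset.mem_Ico] at hq
    have hq1 : p + 1 ≤ q := hq.1
    have heps : |eps m j q| ≤ 1 := by
      unfold eps
      split_ifs
      · rcases Nat.mod_two_eq_zero_or_one (q / 2^j) with h | h <;>
        rcases Nat.mod_two_eq_zero_or_one ((q-1) / 2^j) with h' | h' <;>
          · unfold bitn; rw [h, h']; norm_num
      · norm_num
    have hphi : phi s (tq q) = tq q / s := by
      refine phi_div s (tq q) hs (tq_pos q).le (tq_mono (by omega))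
    rw [abs_mul, hphi, div_pow, tq_sq, hsdef, tq_sq]
    have hpos : (0:ℝ) < (1/16:ℝ)^q / (1/16)^p := by positivity
    calc |eps m j q| * |((1/16:ℝ)^q / (1/16)^p)| ≤ 1 * |((1/16:ℝ)^q / (1/16)^p)| := by
          apply mul_le_mul_of_nonneg_right heps (abs_nonneg _)
      _ = (1/16:ℝ)^q / (1/16)^p := by rw [one_mul, abs_of_pos hpos]
  have hEbound : |∑ q ∈ Ico (p+1) (2^m), eps m j q * (phi s (tq q))^2|
      ≤ ∑ q ∈ Ico (p+1) (2^m), (1/16:ℝ)^q / (1/16)^p :=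
    (Finset.abs_sum_le_sum_abs _ _).trans (Finset.sum_le_sum habs)
  have hgeom : ∑ q ∈ Ico (p+1) (2^m), (1/16:ℝ)^q
      = ((1/16:ℝ)^(2^m) - (1/16)^(p+1)) / ((1/16) - 1) := geom_sum_Ico (by norm_num) hp
  have hA : (0:ℝ) ≤ (1/16:ℝ)^(2^m) := by positivity
  have hx : (0:ℝ) < (1/16:ℝ)^p := by positivity
  have hstep : ∑ q ∈ Ico (p+1) (2^m), (1/16:ℝ)^q / (1/16)^p ≤ 1/8 := by
    rw [← Finset.sum_div, hgeom, pow_succ, div_le_iff₀ hx]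
    have hring : ((1/16:ℝ)^(2^m) - (1/16)^p*(1/16))/((1/16:ℝ) - 1)
        = ((1/16:ℝ)^p*(1/16) - (1/16)^(2^m)) * (16/15) := by ring
    rw [hring]
    nlinarith [hA, hx]
  linarith [hEbound, hstep]

theorem stmt_4 :
    ∃ c : ℝ, 0 < c ∧ ∃ N : ℕ, ∀ n : ℕ, N ≤ n →
      ∃ m : ℕ, c * Real.log n ≤ (m : ℝ) ∧
        ∃ (A : Fin n → Fin n → ℝ) (u : Fin n → Fin n → ℝ)
          (Z : Fin m → Fin n → ℝ) (r : Fin m → ℝ),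
          (∀ i j, A i j = A j i) ∧ (∀ i j, 0 ≤ A i j) ∧ (∀ i, A i i = 0) ∧
          (∀ i, ∑ k, (u i k) ^ 2 = 1) ∧
          ∀ T : Finset (Fin m), ∃ s : ℝ, 0 < s ∧
            ∀ j : Fin m, (r j < slin n s A u (Z j) ↔ j ∈ T) := by
  refine ⟨1/10, by norm_num, 4, fun n hn => ?_⟩
  have hn0 : 0 < n := by omega
  set L := Nat.log 2 n with hL
  have hL2 : 2 ≤ L := by
    rw [hL]
    exact (Nat.le_log_iff_pow_le (by norm_num) (by omega)).mpr (by omega)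
  set m := L - 1 with hm
  have hm1 : 1 ≤ m := by omega
  have hpow : 2^(m+1) ≤ n := by
    have h1 : m + 1 = L := by omega
    rw [h1, hL]
    exact Nat.pow_log_le_self 2 (by omega)
  have hn2 : 2^m ≤ n/2 := by
    have : 2^(m+1) = 2*2^m := by ring
    omega
  -- log bound
  have hlogbound : (1/10 : ℝ) * Real.log n ≤ (m : ℝ) := by
    have h1 : (n:ℝ) < 2^(L+1) := by
      exact_mod_cast Nat.lt_pow_succ_log_self (by norm_num) n
    have h2 : Real.log n < ((L:ℝ)+1) * Real.log 2 := by
      have h5 := Real.log_lt_log (by exact_mod_cast hn0 : (0:ℝ) < n) h1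
      rw [Real.log_pow] at h5
      push_cast at h5
      linarith
    have h3 : Real.log 2 < 0.7 := lt_trans Real.log_two_lt_d9 (by norm_num)
    have h3' : 0 ≤ Real.log 2 := Real.log_nonneg (by norm_num)
    have h4 : (L:ℝ) + 1 ≤ 3*(m:ℝ) := by
      have : L + 1 ≤ 3*m := by omega
      exact_mod_cast this
    nlinarith
  refine ⟨m, hlogbound, ?_⟩
  refine ⟨fun i k => if ((k:ℕ) = (i:ℕ)+1 ∧ (i:ℕ) % 2 = 0) ∨ ((i:ℕ) = (k:ℕ)+1 ∧ (k:ℕ) % 2 = 0)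
      then 1 else 0,
    fun i k => if i = k then 1 else 0,
    fun j v => Xf m (j:ℕ) (v:ℕ),
    fun _ => 1, ?_, ?_, ?_, ?_, ?_⟩
  · intro i k
    dsimp only
    rw [if_congr or_comm rfl rfl]
  · intro i k
    dsimp only
    split_ifs <;> norm_num
  · intro i
    dsimp only
    rw [if_neg (by omega)]
  · intro i
    have h : ∀ k : Fin n, ((if i = k then (1:ℝ) else 0))^2 = if i = k then 1 else 0 := by
      intro k; split_ifs <;> norm_num
    rw [Finset.sum_congr rfl (fun k _ => h k)]
    simp
  · intro T
    set p := ∑ i ∈ T, 2^(i:ℕ) with hpdef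
    have hp : p < 2^m := by
      have h1 : p ≤ ∑ i : Fin m, 2^(i:ℕ) :=
        Finset.sum_le_sum_of_subset (Finset.subset_univ T)
      have h2 : ∑ i : Fin m, 2^(i:ℕ) = ∑ k ∈ range m, 2^k :=
        Fin.sum_univ_eq_sum_range (fun k => 2^k) m
      have h3 : (1:ℕ) ≤ 2^m := Nat.one_le_two_pow
      rw [h2, sum_range_two_pow] at h1
      omega
    have hbit : ∀ j : Fin m, bitn (j:ℕ) p = if j ∈ T then 1 else 0 := by
      intro j
      have himg : p = ∑ i ∈ T.image Fin.val, 2^i := by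
        rw [Finset.sum_image (fun a _ b _ h => Fin.val_injective h)]
      have hmem : (j:ℕ) ∈ T.image Fin.val ↔ j ∈ T := by
        constructor
        · intro h
          obtain ⟨a, ha, hv⟩ := Finset.mem_image.mp h
          rwa [← Fin.val_injective hv]
        · exact fun h => Finset.mem_image_of_mem _ h
      unfold bitn
      rw [himg, bit_sum]
      simp [hmem]
    refine ⟨tq p, tq_pos p, fun j => ?_⟩
    set s := tq p with hsdef
    have hs : 0 < s := tq_pos p
    -- compute slin
    have hip : ∀ i : Fin n, (∑ k : Fin n, (if i = k then (1:ℝ) else 0) * Xf m (j:ℕ) (k:ℕ))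
        = Xf m (j:ℕ) (i:ℕ) := by
      intro i
      simp [ite_mul, Finset.sum_ite_eq]
    have hslin : slin n s
        (fun i k => if ((k:ℕ) = (i:ℕ)+1 ∧ (i:ℕ) % 2 = 0) ∨ ((i:ℕ) = (k:ℕ)+1 ∧ (k:ℕ) % 2 = 0)
          then 1 else 0)
        (fun i k => if i = k then 1 else 0)
        (fun v => Xf m (j:ℕ) (v:ℕ)) = 2 * ∑ q ∈ range (n/2),
        phi s (Xf m (j:ℕ) (2*q)) * phi s (Xf m (j:ℕ) (2*q+1)) := by
      unfold slin
      rw [← sum_pair (fun v => phi s (Xf m (j:ℕ) v)) n]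
      rw [← Fin.sum_univ_eq_sum_range (fun a => ∑ k ∈ range n,
        (if (k = a+1 ∧ a % 2 = 0) ∨ (a = k+1 ∧ k % 2 = 0) then (1:ℝ) else 0)
          * phi s (Xf m (j:ℕ) a) * phi s (Xf m (j:ℕ) k)) n]
      refine Finset.sum_congr rfl (fun i _ => ?_)
      rw [← Fin.sum_univ_eq_sum_range (fun k =>
        (if (k = (i:ℕ)+1 ∧ (i:ℕ) % 2 = 0) ∨ ((i:ℕ) = k+1 ∧ k % 2 = 0) then (1:ℝ) else 0)
          * phi s (Xf m (j:ℕ) (i:ℕ)) * phi s (Xf m (j:ℕ) k)) n]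
      refine Finset.sum_congr rfl (fun k _ => ?_)
      rw [hip i, hip k]
    rw [hslin]
    have hpair : ∀ q ∈ range (n/2),
        phi s (Xf m (j:ℕ) (2*q)) * phi s (Xf m (j:ℕ) (2*q+1))
        = eps m (j:ℕ) q * (phi s (tq q))^2 := fun q _ => pairprod m (j:ℕ) q s hs
    rw [Finset.sum_congr rfl hpair]
    obtain ⟨E, hE, hval⟩ := main_value m (j:ℕ) p (n/2) hp hn2
    rw [hsdef, hval, hbit j]
    have hEa := abs_le.mp hE
    by_cases hj : j ∈ T
    · simp only [hj, if_pos, iff_true]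
      push_cast
      linarith [hEa.1]
    · simp only [hj, if_neg, iff_false, not_lt]
      push_cast
      linarith [hEa.2]
end

section
/- Let N ≥ 1, let b_1, …, b_N be pairwise distinct positive real numbers, and let a_1, …, a_N be real numbers, not all zero. Then the polynomial-exponential sum f(x) = Σ_{i=1}^N a_i · b_i^x has at most N real roots; that is, the set {x ∈ ℝ : Σ_{i=1}^N a_i · b_i^x = 0} is finite and has cardinality at most N. -/
open Real Set

lemma finset_roots_le {f f' : ℝ → ℝ} (hf : ∀ x, HasDerivAt f (f' x) x)
    {n : ℕ} (h'fin : {x : ℝ | f' x = 0}.Finite) (h'card : {x : ℝ | f' x = 0}.ncard ≤ n)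
    (s : Finset ℝ) (hs : ↑s ⊆ {x : ℝ | f x = 0}) : s.card ≤ n + 1 := by
  rcases Nat.eq_zero_or_pos s.card with h0 | hpos
  · omega
  have hcont : Continuous f := by
    rw [continuous_iff_continuousAt]
    exact fun x => (hf x).differentiableAt.continuousAt
  set m := s.card with hm
  let e := s.orderIsoOfFin rfl
  have key : ∀ i : Fin (m - 1), ∃ y : ℝ,
      (e ⟨i, by omega⟩ : ℝ) < y ∧ y < (e ⟨i + 1, by omega⟩ : ℝ) ∧ f' y = 0 := by
    intro i
    have hlt : (e ⟨i, by omega⟩ : ℝ) < (e ⟨i + 1, by omega⟩ : ℝ) := by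
      exact_mod_cast e.strictMono (by simp [Fin.lt_def])
    have hz1 : f (e ⟨i, by omega⟩ : ℝ) = 0 := hs (e ⟨i, by omega⟩).2
    have hz2 : f (e ⟨i + 1, by omega⟩ : ℝ) = 0 := hs (e ⟨i + 1, by omega⟩).2
    obtain ⟨c, hc, hc0⟩ := exists_deriv_eq_zero hlt hcont.continuousOn (by rw [hz1, hz2])
    exact ⟨c, hc.1, hc.2, by rw [← (hf c).deriv]; exact hc0⟩
  let g : Fin (m - 1) → ℝ := fun i => (key i).choose
  have hg1 : ∀ i : Fin (m - 1), (e ⟨(i : ℕ), by omega⟩ : ℝ) < g i :=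
    fun i => (key i).choose_spec.1
  have hg2 : ∀ i : Fin (m - 1), g i < (e ⟨(i : ℕ) + 1, by omega⟩ : ℝ) :=
    fun i => (key i).choose_spec.2.1
  have hg3 : ∀ i, f' (g i) = 0 := fun i => (key i).choose_spec.2.2
  have hmono : StrictMono g := by
    intro i j hij
    calc g i < (e ⟨(i : ℕ) + 1, by omega⟩ : ℝ) := hg2 i
      _ ≤ (e ⟨(j : ℕ), by omega⟩ : ℝ) := by
          exact_mod_cast e.monotone (by simp [Fin.le_def]; omega)
      _ < g j := hg1 j
  have hsub : ↑(Finset.image g Finset.univ) ⊆ {x : ℝ | f' x = 0} := by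
    intro x hx
    simp only [Finset.coe_image, Set.mem_image] at hx
    obtain ⟨i, _, rfl⟩ := hx
    exact hg3 i
  have hcard : (Finset.image g Finset.univ).card = m - 1 := by
    rw [Finset.card_image_of_injective _ hmono.injective, Finset.card_univ, Fintype.card_fin]
  have := Set.ncard_le_ncard hsub h'fin
  rw [Set.ncard_coe_finset, hcard] at this
  omega

lemma roots_finite_card {f f' : ℝ → ℝ} (hf : ∀ x, HasDerivAt f (f' x) x)
    {n : ℕ} (h'fin : {x : ℝ | f' x = 0}.Finite) (h'card : {x : ℝ | f' x = 0}.ncard ≤ n) :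
    {x : ℝ | f x = 0}.Finite ∧ {x : ℝ | f x = 0}.ncard ≤ n + 1 := by
  have hfin : {x : ℝ | f x = 0}.Finite := by
    by_contra h
    obtain ⟨t, hts, htc⟩ := Set.Infinite.exists_subset_card_eq h (n + 2)
    have := finset_roots_le hf h'fin h'card t hts
    omega
  refine ⟨hfin, ?_⟩
  have := finset_roots_le hf h'fin h'card hfin.toFinset (by simp)
  rwa [← Set.ncard_eq_toFinset_card _ hfin] at this

lemma main_expsum : ∀ N : ℕ, ∀ a b : Fin (N + 1) → ℝ,
    (∀ i, 0 < b i) → Function.Injective b → (∃ i, a i ≠ 0) →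
    {x : ℝ | ∑ i, a i * (b i) ^ x = 0}.Finite ∧
      {x : ℝ | ∑ i, a i * (b i) ^ x = 0}.ncard ≤ N + 1 := by
  intro N
  induction N with
  | zero =>
    intro a b hb hbinj ha
    obtain ⟨i, hi⟩ := ha
    have hi0 : a 0 ≠ 0 := by rwa [Subsingleton.elim (0 : Fin 1) i]
    have : {x : ℝ | ∑ i, a i * (b i) ^ x = 0} = ∅ := by
      ext x
      simp only [Set.mem_setOf_eq, Set.mem_empty_iff_false, iff_false]
      intro h
      rw [Fin.sum_univ_succ, Fin.sum_univ_zero, add_zero] at h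
      exact hi0 ((mul_eq_zero.mp h).resolve_right (Real.rpow_pos_of_pos (hb 0) x).ne')
    rw [this]
    simp
  | succ N ih =>
    intro a b hb hbinj ha
    set L : Fin (N + 2) := Fin.last (N + 1) with hL
    set c : Fin (N + 2) → ℝ := fun i => b i / b L with hc
    have hcpos : ∀ i, 0 < c i := fun i => div_pos (hb i) (hb L)
    have hbL : b L ≠ 0 := (hb L).ne'
    -- zero set of f equals zero set of g
    have hZeq : {x : ℝ | ∑ i, a i * (b i) ^ x = 0} =
        {x : ℝ | ∑ i, a i * (c i) ^ x = 0} := by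
      ext x
      simp only [Set.mem_setOf_eq]
      have hsum : ∀ i : Fin (N + 2), a i * (b i) ^ x = (b L) ^ x * (a i * (c i) ^ x) := by
        intro i
        have : b i = c i * b L := by rw [hc]; exact (div_mul_cancel₀ _ hbL).symm
        rw [this, Real.mul_rpow (hcpos i).le (hb L).le]
        ring
      rw [Finset.sum_congr rfl (fun i _ => hsum i), ← Finset.mul_sum]
      constructor
      · intro h
        exact (mul_eq_zero.mp h).resolve_left (Real.rpow_pos_of_pos (hb L) x).ne'
      · intro h; rw [h, mul_zero]
    rw [hZeq]
    -- derivative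
    have hderiv : ∀ x : ℝ, HasDerivAt (fun y => ∑ i, a i * (c i) ^ y)
        (∑ i, a i * ((c i) ^ x * Real.log (c i))) x := by
      intro x
      exact HasDerivAt.fun_sum fun i _ =>
        ((Real.hasStrictDerivAt_const_rpow (hcpos i) x).hasDerivAt).const_mul (a i)
    set a' : Fin (N + 1) → ℝ := fun i => a i.castSucc * Real.log (c i.castSucc) with ha'
    set c' : Fin (N + 1) → ℝ := fun i => c i.castSucc with hc'
    have hderivsum : ∀ x : ℝ, (∑ i, a i * ((c i) ^ x * Real.log (c i))) =
        ∑ i, a' i * (c' i) ^ x := by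
      intro x
      rw [Fin.sum_univ_castSucc]
      have hcL : c L = 1 := by rw [hc]; exact div_self hbL
      rw [hcL]
      simp only [Real.log_one, mul_zero, add_zero]
      exact Finset.sum_congr rfl fun i _ => by ring
    by_cases hcase : ∃ i : Fin (N + 1), a' i ≠ 0
    · -- apply IH to a', c'
      have hc'pos : ∀ i, 0 < c' i := fun i => hcpos _
      have hc'inj : Function.Injective c' := by
        intro i j h
        have : b i.castSucc = b j.castSucc := by
          have := h
          simp only [hc', hc] at this
          field_simp at this
          exact this
        exact Fin.castSucc_injective _ (hbinj this)
      obtain ⟨hfin', hcard'⟩ := ih a' c' hc'pos hc'inj hcase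
      have hderiv' : ∀ x : ℝ, HasDerivAt (fun y => ∑ i, a i * (c i) ^ y)
          (∑ i, a' i * (c' i) ^ x) x := by
        intro x
        rw [← hderivsum]
        exact hderiv x
      exact roots_finite_card hderiv' hfin' hcard'
    · -- all a' = 0, so a i.castSucc = 0, a L ≠ 0, f never zero
      push_neg at hcase
      have hacast : ∀ i : Fin (N + 1), a i.castSucc = 0 := by
        intro i
        have h0 := hcase i
        have hlog : Real.log (c i.castSucc) ≠ 0 := by
          intro hl
          rcases Real.log_eq_zero.mp hl with h | h | h
          · exact (hcpos _).ne' h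
          · have : b i.castSucc = b L := by
              have : b i.castSucc / b L = 1 := h
              field_simp at this
              exact this
            exact absurd (hbinj this) (Fin.ne_of_lt (Fin.castSucc_lt_last i))
          · linarith [hcpos i.castSucc]
        simp only [ha', mul_eq_zero] at h0
        exact h0.resolve_right hlog
      have haL : a L ≠ 0 := by
        obtain ⟨i, hi⟩ := ha
        rcases Fin.lastCases (motive := fun j => a j ≠ 0 → a L ≠ 0) (fun h => h)
          (fun j h => absurd (hacast j) h) i hi with h
        exact h
      have : {x : ℝ | ∑ i, a i * (c i) ^ x = 0} = ∅ := by
        ext x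
        simp only [Set.mem_setOf_eq, Set.mem_empty_iff_false, iff_false]
        intro h
        rw [Fin.sum_univ_castSucc] at h
        simp only [hacast, zero_mul, Finset.sum_const_zero, zero_add] at h
        have hcL : c L = 1 := by rw [hc]; exact div_self hbL
        rw [hcL, Real.one_rpow, mul_one] at h
        exact haL h
      rw [this]
      simp

theorem stmt_6 (N : ℕ) (hN : 1 ≤ N) (a b : Fin N → ℝ)
    (hb : ∀ i, 0 < b i) (hbinj : Function.Injective b) (ha : ∃ i, a i ≠ 0) :
    {x : ℝ | ∑ i, a i * (b i) ^ x = 0}.Finite ∧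
      {x : ℝ | ∑ i, a i * (b i) ^ x = 0}.ncard ≤ N := by
  obtain ⟨M, rfl⟩ : ∃ M, N = M + 1 := ⟨N - 1, by omega⟩
  exact main_expsum M a b hb hbinj ha
end

section
/- Let d_1, d_2, d_3, d_4 be positive real numbers such that the multiset {d_1, d_2} is not equal to the multiset {d_3, d_4} (i.e., it is not the case that (d_1 = d_3 and d_2 = d_4) or (d_1 = d_4 and d_2 = d_3)). Then the set {α ∈ ℝ : d_1^α + d_2^α = d_3^α + d_4^α} is finite and has at most 4 elements. (Consequently, for the α-weighted linkage rule of class 𝒜₁, the comparison between the merge values of two candidate pairs of clusters, which is determined by eight points, changes outcome at most 4 times as α ranges over ℝ.) -/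
open Real

private lemma expsum_hasDerivAt (n : ℕ) (c a : Fin n → ℝ) (t : ℝ) :
    HasDerivAt (fun x => ∑ i, c i * Real.exp (a i * x))
      (∑ i, c i * a i * Real.exp (a i * t)) t := by
  apply HasDerivAt.fun_sum
  intro i _
  have h1 : HasDerivAt (fun x : ℝ => a i * x) (a i) t := by
    simpa using (hasDerivAt_id t).const_mul (a i)
  have h2 := (h1.exp).const_mul (c i)
  convert h2 using 1
  · rfl
  · ring

private lemma no_n_zeros : ∀ (n : ℕ) (c a : Fin (n+1) → ℝ), (∀ i, c i ≠ 0) →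
    Function.Injective a → ∀ x : Fin (n+1) → ℝ, StrictMono x →
    ∃ j, ∑ i, c i * Real.exp (a i * x j) ≠ 0 := by
  intro n
  induction n with
  | zero =>
    intro c a hc ha x hx
    refine ⟨0, ?_⟩
    rw [Fin.sum_univ_one]
    exact mul_ne_zero (hc 0) (Real.exp_ne_zero _)
  | succ n ih =>
    intro c a hc ha x hx
    by_contra hcon
    push_neg at hcon
    set b : Fin (n+2) → ℝ := fun i => a i - a 0 with hb
    set g : ℝ → ℝ := fun t => ∑ i, c i * Real.exp (b i * t) with hg
    have hgzero : ∀ j, g (x j) = 0 := by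
      intro j
      have hsplit : g (x j) = Real.exp (-(a 0) * x j) * ∑ i, c i * Real.exp (a i * x j) := by
        rw [hg, Finset.mul_sum]
        apply Finset.sum_congr rfl
        intro i _
        have : b i * x j = a i * x j + (-(a 0) * x j) := by rw [hb]; ring
        rw [this, Real.exp_add]
        ring
      rw [hsplit, hcon j, mul_zero]
    have hgd : ∀ t, HasDerivAt g (∑ i, c i * b i * Real.exp (b i * t)) t :=
      fun t => expsum_hasDerivAt _ c b t
    have hgc : Continuous g := by
      have : Differentiable ℝ g := fun t => (hgd t).differentiableAt
      exact this.continuous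
    have hroll : ∀ j : Fin (n+1), ∃ y ∈ Set.Ioo (x j.castSucc) (x j.succ), deriv g y = 0 := by
      intro j
      exact exists_deriv_eq_zero (hx (Fin.castSucc_lt_succ : j.castSucc < j.succ)) hgc.continuousOn
        (by rw [hgzero, hgzero])
    choose y hy1 hy2 using hroll
    have hymono : StrictMono y := by
      intro j k hjk
      have h1 : y j < x j.succ := (hy1 j).2
      have h2 : x k.castSucc < y k := (hy1 k).1
      have h3 : x j.succ ≤ x k.castSucc := by
        apply hx.monotone
        rw [Fin.succ_le_castSucc_iff]
        exact hjk
      linarith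
    have hDzero : ∀ j, ∑ i : Fin (n+1),
        (c i.succ * b i.succ) * Real.exp (b i.succ * y j) = 0 := by
      intro j
      have hd := (hgd (y j)).deriv
      have h0 : deriv g (y j) = 0 := hy2 j
      rw [hd] at h0
      rw [Fin.sum_univ_succ] at h0
      have hb0 : b 0 = 0 := by rw [hb]; ring
      rw [hb0] at h0
      simp only [mul_zero, zero_mul, zero_add] at h0
      exact h0
    have hc' : ∀ i : Fin (n+1), c i.succ * b i.succ ≠ 0 := by
      intro i
      refine mul_ne_zero (hc _) ?_
      rw [hb]
      exact sub_ne_zero.mpr (fun h => Fin.succ_ne_zero i (ha h))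
    have ha' : Function.Injective (fun i : Fin (n+1) => b i.succ) := by
      intro i j h
      simp only [hb, sub_left_inj] at h
      exact Fin.succ_injective _ (ha h)
    obtain ⟨j, hj⟩ := ih (fun i => c i.succ * b i.succ) (fun i => b i.succ) hc' ha' y hymono
    exact hj (hDzero j)

private lemma zeros_card (n : ℕ) (c a : Fin (n+1) → ℝ) (hc : ∀ i, c i ≠ 0)
    (ha : Function.Injective a) :
    {x : ℝ | ∑ i, c i * Real.exp (a i * x) = 0}.Finite ∧
      {x : ℝ | ∑ i, c i * Real.exp (a i * x) = 0}.ncard ≤ n := by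
  set Z := {x : ℝ | ∑ i, c i * Real.exp (a i * x) = 0} with hZ
  have key : ∀ s : Finset ℝ, ↑s ⊆ Z → s.card ≤ n := by
    intro s hs
    by_contra hcard
    push_neg at hcard
    obtain ⟨t, hts, htc⟩ := Finset.exists_subset_card_eq hcard
    set x := t.orderEmbOfFin htc with hx
    obtain ⟨j, hj⟩ := no_n_zeros n c a hc ha x (x.strictMono)
    exact hj (hs (hts (t.orderEmbOfFin_mem htc j)))
  have hfin : Z.Finite := by
    by_contra hinf
    obtain ⟨t, h1, h2⟩ := Set.Infinite.exists_subset_card_eq hinf (n+1)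
    have := key t h1
    omega
  refine ⟨hfin, ?_⟩
  have := key hfin.toFinset (by simp)
  rwa [Set.ncard_eq_toFinset_card Z hfin]

private lemma log_ne {x y : ℝ} (hx : 0 < x) (hy : 0 < y) (h : x ≠ y) :
    Real.log x ≠ Real.log y :=
  fun he => h (Real.log_injOn_pos (Set.mem_Ioi.mpr hx) (Set.mem_Ioi.mpr hy) he)

private lemma rpow_eq_rpow_set {x y : ℝ} (hx : 0 < x) (hy : 0 < y) (hxy : x ≠ y) :
    {α : ℝ | x ^ α = y ^ α} = {0} := by
  ext α
  simp only [Set.mem_setOf_eq, Set.mem_singleton_iff]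
  constructor
  · intro h
    have hl := congrArg Real.log h
    rw [Real.log_rpow hx, Real.log_rpow hy] at hl
    by_contra hα
    exact log_ne hx hy hxy (mul_left_cancel₀ hα hl)
  · rintro rfl
    simp

private lemma inj3 {a b c : ℝ} (hab : a ≠ b) (hac : a ≠ c) (hbc : b ≠ c) :
    Function.Injective ![a, b, c] := by
  intro i j h
  fin_cases i <;> fin_cases j <;> simp_all

private lemma inj4 {a b c d : ℝ} (hab : a ≠ b) (hac : a ≠ c) (had : a ≠ d)
    (hbc : b ≠ c) (hbd : b ≠ d) (hcd : c ≠ d) :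
    Function.Injective ![a, b, c, d] := by
  intro i j h
  fin_cases i <;> fin_cases j <;> simp_all

theorem stmt_7 (d₁ d₂ d₃ d₄ : ℝ) (h1 : 0 < d₁) (h2 : 0 < d₂) (h3 : 0 < d₃) (h4 : 0 < d₄)
    (hne : ¬((d₁ = d₃ ∧ d₂ = d₄) ∨ (d₁ = d₄ ∧ d₂ = d₃))) :
    {α : ℝ | d₁ ^ α + d₂ ^ α = d₃ ^ α + d₄ ^ α}.Finite ∧
      {α : ℝ | d₁ ^ α + d₂ ^ α = d₃ ^ α + d₄ ^ α}.ncard ≤ 4 := by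
  by_cases h13 : d₁ = d₃
  · have h24 : d₂ ≠ d₄ := fun h => hne (Or.inl ⟨h13, h⟩)
    have hset : {α : ℝ | d₁ ^ α + d₂ ^ α = d₃ ^ α + d₄ ^ α} = {α : ℝ | d₂ ^ α = d₄ ^ α} := by
      ext α
      subst h13
      simp only [Set.mem_setOf_eq]
      constructor <;> intro h <;> linarith
    rw [hset, rpow_eq_rpow_set h2 h4 h24]
    exact ⟨Set.finite_singleton 0, by simp⟩
  by_cases h14 : d₁ = d₄
  · have h23 : d₂ ≠ d₃ := fun h => hne (Or.inr ⟨h14, h⟩)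
    have hset : {α : ℝ | d₁ ^ α + d₂ ^ α = d₃ ^ α + d₄ ^ α} = {α : ℝ | d₂ ^ α = d₃ ^ α} := by
      ext α
      subst h14
      simp only [Set.mem_setOf_eq]
      constructor <;> intro h <;> linarith
    rw [hset, rpow_eq_rpow_set h2 h3 h23]
    exact ⟨Set.finite_singleton 0, by simp⟩
  by_cases h23 : d₂ = d₃
  · have hset : {α : ℝ | d₁ ^ α + d₂ ^ α = d₃ ^ α + d₄ ^ α} = {α : ℝ | d₁ ^ α = d₄ ^ α} := by
      ext α
      subst h23
      simp only [Set.mem_setOf_eq]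
      constructor <;> intro h <;> linarith
    rw [hset, rpow_eq_rpow_set h1 h4 h14]
    exact ⟨Set.finite_singleton 0, by simp⟩
  by_cases h24 : d₂ = d₄
  · have hset : {α : ℝ | d₁ ^ α + d₂ ^ α = d₃ ^ α + d₄ ^ α} = {α : ℝ | d₁ ^ α = d₃ ^ α} := by
      ext α
      subst h24
      simp only [Set.mem_setOf_eq]
      constructor <;> intro h <;> linarith
    rw [hset, rpow_eq_rpow_set h1 h3 h13]
    exact ⟨Set.finite_singleton 0, by simp⟩
  by_cases h12 : d₁ = d₂ <;> by_cases h34 : d₃ = d₄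
  · -- d₁ = d₂, d₃ = d₄ : equation 2 d₁^α = 2 d₃^α
    have hset : {α : ℝ | d₁ ^ α + d₂ ^ α = d₃ ^ α + d₄ ^ α} = {α : ℝ | d₁ ^ α = d₃ ^ α} := by
      ext α
      subst h12; subst h34
      simp only [Set.mem_setOf_eq]
      constructor <;> intro h <;> linarith
    rw [hset, rpow_eq_rpow_set h1 h3 h13]
    exact ⟨Set.finite_singleton 0, by simp⟩
  · -- d₁ = d₂, d₃ ≠ d₄ : 3 terms
    have hset : {α : ℝ | d₁ ^ α + d₂ ^ α = d₃ ^ α + d₄ ^ α} =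
        {x : ℝ | ∑ i, (![2, -1, -1] : Fin 3 → ℝ) i *
          Real.exp ((![Real.log d₁, Real.log d₃, Real.log d₄] : Fin 3 → ℝ) i * x) = 0} := by
      ext x
      subst h12
      simp only [Set.mem_setOf_eq, Fin.sum_univ_three, Matrix.cons_val_zero,
        Matrix.cons_val_one, Matrix.head_cons, Matrix.cons_val_two, Matrix.tail_cons]
      rw [Real.rpow_def_of_pos h1, Real.rpow_def_of_pos h3, Real.rpow_def_of_pos h4]
      constructor <;> intro h <;> linarith
    rw [hset]
    have hinj := inj3 (log_ne h1 h3 h13) (log_ne h1 h4 h14) (log_ne h3 h4 h34)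
    obtain ⟨hf, hc⟩ := zeros_card 2 ![2, -1, -1] ![Real.log d₁, Real.log d₃, Real.log d₄]
      (by intro i; fin_cases i <;> norm_num) hinj
    exact ⟨hf, hc.trans (by norm_num)⟩
  · -- d₁ ≠ d₂, d₃ = d₄ : 3 terms
    have hset : {α : ℝ | d₁ ^ α + d₂ ^ α = d₃ ^ α + d₄ ^ α} =
        {x : ℝ | ∑ i, (![1, 1, -2] : Fin 3 → ℝ) i *
          Real.exp ((![Real.log d₁, Real.log d₂, Real.log d₃] : Fin 3 → ℝ) i * x) = 0} := by
      ext x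
      subst h34
      simp only [Set.mem_setOf_eq, Fin.sum_univ_three, Matrix.cons_val_zero,
        Matrix.cons_val_one, Matrix.head_cons, Matrix.cons_val_two, Matrix.tail_cons]
      rw [Real.rpow_def_of_pos h1, Real.rpow_def_of_pos h2, Real.rpow_def_of_pos h3]
      constructor <;> intro h <;> linarith
    rw [hset]
    have hinj := inj3 (log_ne h1 h2 h12) (log_ne h1 h3 h13) (log_ne h2 h3 h23)
    obtain ⟨hf, hc⟩ := zeros_card 2 ![1, 1, -2] ![Real.log d₁, Real.log d₂, Real.log d₃]
      (by intro i; fin_cases i <;> norm_num) hinj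
    exact ⟨hf, hc.trans (by norm_num)⟩
  · -- all distinct : 4 terms
    have hset : {α : ℝ | d₁ ^ α + d₂ ^ α = d₃ ^ α + d₄ ^ α} =
        {x : ℝ | ∑ i, (![1, 1, -1, -1] : Fin 4 → ℝ) i *
          Real.exp ((![Real.log d₁, Real.log d₂, Real.log d₃, Real.log d₄] : Fin 4 → ℝ) i * x)
            = 0} := by
      ext x
      simp only [Set.mem_setOf_eq, Fin.sum_univ_four, Matrix.cons_val_zero,
        Matrix.cons_val_one, Matrix.head_cons, Matrix.cons_val_two, Matrix.tail_cons,
        Matrix.cons_val_three]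
      rw [Real.rpow_def_of_pos h1, Real.rpow_def_of_pos h2, Real.rpow_def_of_pos h3,
        Real.rpow_def_of_pos h4]
      constructor <;> intro h <;> linarith
    rw [hset]
    have hinj := inj4 (log_ne h1 h2 h12) (log_ne h1 h3 h13) (log_ne h1 h4 h14)
      (log_ne h2 h3 h23) (log_ne h2 h4 h24) (log_ne h3 h4 h34)
    obtain ⟨hf, hc⟩ := zeros_card 3 ![1, 1, -1, -1]
      ![Real.log d₁, Real.log d₂, Real.log d₃, Real.log d₄]
      (by intro i; fin_cases i <;> norm_num) hinj
    exact ⟨hf, hc.trans (by norm_num)⟩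
end

section
/- Let N ≥ 1 and let c_1, …, c_N and e_1, …, e_N be positive real numbers such that the multiset {c_1, …, c_N} is not equal to the multiset {e_1, …, e_N}. Then the set {p ∈ ℝ : Σ_{i=1}^N c_i^p = Σ_{i=1}^N e_i^p} is finite and has at most 2N elements. (Consequently, for a cluster T of at most N points and two candidate centers v_1, v_2 ∈ T, the comparison Σ_{q∈T} d(q,v_1)^p versus Σ_{q∈T} d(q,v_2)^p changes outcome at most 2N times as the pruning-function exponent p ranges over ℝ, unless the two multisets of distances coincide.) -/
open Set Real

/-- If between any two points of `S` there is a point of the finite set `T`,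
then `S` is finite with at most `T.ncard + 1` elements. -/
lemma aux_rolle_count (S T : Set ℝ) (hT : T.Finite)
    (h : ∀ a b, a ∈ S → b ∈ S → a < b → ∃ x, x ∈ Set.Ioo a b ∧ x ∈ T) :
    S.Finite ∧ S.ncard ≤ T.ncard + 1 := by
  set m := T.ncard with hm
  have key : ∀ t : Set ℝ, t ⊆ S → t.Finite → t.ncard ≤ m + 1 := by
    intro t hts htf
    by_contra hlt
    push_neg at hlt
    obtain ⟨u, hut, hu⟩ := Set.exists_subset_card_eq (s := t) (n := m + 2) (by omega)
    have huf : u.Finite := htf.subset hut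
    have hcard : huf.toFinset.card = m + 2 := by
      rw [← Set.ncard_eq_toFinset_card u huf]
      exact hu
    set x : Fin (m + 2) ≃o huf.toFinset := huf.toFinset.orderIsoOfFin hcard with hx
    have hxS : ∀ j : Fin (m + 2), ((x j : ℝ)) ∈ S := by
      intro j
      have := (x j).2
      rw [Set.Finite.mem_toFinset] at this
      exact hts (hut this)
    have hmono : ∀ {i j : Fin (m + 2)}, i < j → ((x i : ℝ)) < (x j : ℝ) := by
      intro i j hij
      exact_mod_cast (x.lt_iff_lt.mpr hij)
    have hmono' : ∀ {i j : Fin (m + 2)}, i ≤ j → ((x i : ℝ)) ≤ (x j : ℝ) := by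
      intro i j hij
      exact_mod_cast (x.le_iff_le.mpr hij)
    have hstep : ∀ i : Fin (m + 1), ∃ y, y ∈ Set.Ioo ((x i.castSucc : ℝ)) (x i.succ : ℝ) ∧ y ∈ T :=
      fun i => h _ _ (hxS _) (hxS _) (hmono Fin.castSucc_lt_succ)
    choose y hy1 hy2 using hstep
    have hyinj : Function.Injective y := by
      have hysm : StrictMono y := by
        intro i j hij
        calc y i < (x i.succ : ℝ) := (hy1 i).2
          _ ≤ (x j.castSucc : ℝ) := hmono' (by
              rw [Fin.succ_le_castSucc_iff]; exact hij)
          _ < y j := (hy1 j).1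
      exact hysm.injective
    have himg : ((Finset.univ.image y : Finset ℝ) : Set ℝ) ⊆ T := by
      intro z hz
      simp only [Finset.coe_image, Finset.coe_univ, Set.image_univ, Set.mem_range] at hz
      obtain ⟨i, rfl⟩ := hz
      exact hy2 i
    have hc1 : (Finset.univ.image y).card = m + 1 := by
      rw [Finset.card_image_of_injective _ hyinj, Finset.card_univ, Fintype.card_fin]
    have := Set.ncard_le_ncard himg hT
    rw [Set.ncard_coe_finset, hc1] at this
    omega
  have hSfin : S.Finite := by
    by_contra hinf
    have hinf' : S.Infinite := hinf
    obtain ⟨t, hts, htf, htc⟩ := hinf'.exists_subset_ncard_eq (m + 2)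
    have := key t hts htf
    omega
  exact ⟨hSfin, key S Set.Subset.rfl hSfin⟩

/-- derivative of an exponential sum -/
lemma aux_hasDerivAt (s : Finset ℝ) (hpos : ∀ v ∈ s, 0 < v) (a : ℝ → ℝ) (p : ℝ) :
    HasDerivAt (fun q => ∑ v ∈ s, a v * v ^ q)
      (∑ v ∈ s, a v * (v ^ p * Real.log v)) p := by
  refine HasDerivAt.fun_sum fun v hv => ?_
  exact ((Real.hasStrictDerivAt_const_rpow (hpos v hv) p).hasDerivAt).const_mul (a v)

lemma aux_expsum (n : ℕ) : ∀ (s : Finset ℝ), s.card = n → (∀ v ∈ s, 0 < v) →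
    ∀ (a : ℝ → ℝ), (∃ v ∈ s, a v ≠ 0) →
    {p : ℝ | ∑ v ∈ s, a v * v ^ p = 0}.Finite ∧
      {p : ℝ | ∑ v ∈ s, a v * v ^ p = 0}.ncard + 1 ≤ n := by
  induction n with
  | zero =>
    rintro s hs _ a ⟨v, hv, -⟩
    rw [Finset.card_eq_zero.mp hs] at hv
    simp at hv
  | succ n IH =>
    rintro s hsc hpos a ⟨v0, hv0s, hv0⟩
    have hv0pos : 0 < v0 := hpos v0 hv0s
    by_cases hrest : ∀ v ∈ s.erase v0, a v = 0
    · have hsingle : ∀ p : ℝ, ∑ v ∈ s, a v * v ^ p = a v0 * v0 ^ p := by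
        intro p
        refine Finset.sum_eq_single_of_mem v0 hv0s fun b hb hne => ?_
        rw [hrest b (Finset.mem_erase.mpr ⟨hne, hb⟩), zero_mul]
      have hempty : {p : ℝ | ∑ v ∈ s, a v * v ^ p = 0} = ∅ := by
        ext p
        simp only [Set.mem_setOf_eq, Set.mem_empty_iff_false, iff_false, hsingle p]
        exact mul_ne_zero hv0 (ne_of_gt (Real.rpow_pos_of_pos hv0pos p))
      rw [hempty]
      exact ⟨Set.finite_empty, by simp⟩
    · push_neg at hrest
      obtain ⟨v1, hv1e, hv1⟩ := hrest
      have hv1mem : v1 ∈ s := Finset.mem_of_mem_erase hv1e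
      have hv1ne : v1 ≠ v0 := (Finset.mem_erase.mp hv1e).1
      have hv0ne : v0 ≠ 0 := ne_of_gt hv0pos
      have hinj : Function.Injective (fun v : ℝ => v / v0) := by
        intro x y hxy
        have h2 : x / v0 * v0 = y / v0 * v0 := by simp only at hxy; rw [hxy]
        rwa [div_mul_cancel₀ _ hv0ne, div_mul_cancel₀ _ hv0ne] at h2
      set s' : Finset ℝ := (s.erase v0).image (fun v => v / v0) with hs'
      set a' : ℝ → ℝ := fun w => a (w * v0) * Real.log w with ha'
      have hs'card : s'.card = n := by
        rw [hs', Finset.card_image_of_injective _ hinj, Finset.card_erase_of_mem hv0s, hsc]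
        omega
      have hs'pos : ∀ w ∈ s', 0 < w := by
        intro w hw
        rw [hs', Finset.mem_image] at hw
        obtain ⟨v, hv, rfl⟩ := hw
        exact div_pos (hpos v (Finset.mem_of_mem_erase hv)) hv0pos
      have hs'ne : ∃ w ∈ s', a' w ≠ 0 := by
        refine ⟨v1 / v0, Finset.mem_image_of_mem _ hv1e, ?_⟩
        rw [ha']
        simp only
        rw [div_mul_cancel₀ _ hv0ne]
        exact mul_ne_zero hv1 (Real.log_ne_zero_of_pos_of_ne_one
          (div_pos (hpos v1 hv1mem) hv0pos)
          (fun h => hv1ne ((div_eq_one_iff_eq hv0ne).mp h)))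
      obtain ⟨hfin', hcard'⟩ := IH s' hs'card hs'pos a' hs'ne
      set g : ℝ → ℝ := fun p => ∑ v ∈ s, a v * (v / v0) ^ p with hg
      have hgderiv : ∀ p : ℝ, HasDerivAt g (∑ w ∈ s', a' w * w ^ p) p := by
        intro p
        have h1 := aux_hasDerivAt s (fun v hv => hpos v hv) a p
        -- not directly; do it for v/v0
        have h2 : HasDerivAt g (∑ v ∈ s, a v * ((v / v0) ^ p * Real.log (v / v0))) p := by
          refine HasDerivAt.fun_sum fun v hv => ?_
          exact ((Real.hasStrictDerivAt_const_rpow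
            (div_pos (hpos v hv) hv0pos) p).hasDerivAt).const_mul (a v)
        convert h2 using 1
        have hzero : a v0 * ((v0 / v0) ^ p * Real.log (v0 / v0)) = 0 := by
          rw [div_self hv0ne, Real.log_one, mul_zero, mul_zero]
        rw [← Finset.sum_erase (f := fun v => a v * ((v / v0) ^ p * Real.log (v / v0)))
          s hzero, hs', Finset.sum_image (fun x hx y hy h => hinj h)]
        refine Finset.sum_congr rfl fun v hv => ?_
        rw [ha']
        simp only
        rw [div_mul_cancel₀ _ hv0ne]
        ring
      have hZeq : {p : ℝ | ∑ v ∈ s, a v * v ^ p = 0} = {p : ℝ | g p = 0} := by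
        ext p
        simp only [Set.mem_setOf_eq, hg]
        have : ∀ v ∈ s, a v * (v / v0) ^ p = (a v * v ^ p) / v0 ^ p := by
          intro v hv
          rw [Real.div_rpow (le_of_lt (hpos v hv)) (le_of_lt hv0pos)]
          ring
        rw [Finset.sum_congr rfl this, ← Finset.sum_div]
        rw [div_eq_zero_iff]
        have : (v0 : ℝ) ^ p ≠ 0 := ne_of_gt (Real.rpow_pos_of_pos hv0pos p)
        tauto
      have hbetween : ∀ x1 x2, x1 ∈ {p : ℝ | ∑ v ∈ s, a v * v ^ p = 0} →
          x2 ∈ {p : ℝ | ∑ v ∈ s, a v * v ^ p = 0} → x1 < x2 →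
          ∃ z, z ∈ Set.Ioo x1 x2 ∧ z ∈ {p : ℝ | ∑ w ∈ s', a' w * w ^ p = 0} := by
        intro x1 x2 h1 h2 h12
        rw [hZeq] at h1 h2
        have hgc : ContinuousOn g (Set.Icc x1 x2) :=
          (fun p _ => ((hgderiv p).continuousAt).continuousWithinAt)
        obtain ⟨z, hz1, hz2⟩ := exists_deriv_eq_zero h12 hgc (by
          rw [Set.mem_setOf_eq] at h1 h2; rw [h1, h2])
        refine ⟨z, hz1, ?_⟩
        rw [Set.mem_setOf_eq, ← (hgderiv z).deriv, hz2]
      obtain ⟨hfin, hle⟩ := aux_rolle_count _ _ hfin' hbetween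
      exact ⟨hfin, by omega⟩

theorem stmt_8 (N : ℕ) (hN : 1 ≤ N) (c e : Fin N → ℝ)
    (hc : ∀ i, 0 < c i) (he : ∀ i, 0 < e i)
    (hne : Multiset.map c Finset.univ.val ≠ Multiset.map e Finset.univ.val) :
    {p : ℝ | ∑ i, (c i) ^ p = ∑ i, (e i) ^ p}.Finite ∧
      {p : ℝ | ∑ i, (c i) ^ p = ∑ i, (e i) ^ p}.ncard ≤ 2 * N := by
  classical
  set M : Multiset ℝ := Multiset.map c Finset.univ.val with hM
  set M' : Multiset ℝ := Multiset.map e Finset.univ.val with hM'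
  set s : Finset ℝ := M.toFinset ∪ M'.toFinset with hs
  set a : ℝ → ℝ := fun v => (M.count v : ℝ) - (M'.count v : ℝ) with ha
  have hpos : ∀ v ∈ s, 0 < v := by
    intro v hv
    rw [hs, Finset.mem_union, Multiset.mem_toFinset, Multiset.mem_toFinset] at hv
    rcases hv with hv | hv
    · obtain ⟨i, _, rfl⟩ := Multiset.mem_map.mp hv; exact hc i
    · obtain ⟨i, _, rfl⟩ := Multiset.mem_map.mp hv; exact he i
  have hsum : ∀ (f : Fin N → ℝ), (∀ i, 0 < f i) →
      Multiset.map f Finset.univ.val ≤ 0 ∨ True := fun _ _ => Or.inr trivial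
  -- generic: sum over Fin N of f i ^ p equals weighted sum over s
  have hkey : ∀ (f : Fin N → ℝ) (p : ℝ),
      (Multiset.map f Finset.univ.val).toFinset ⊆ s →
      ∑ i, (f i) ^ p =
        ∑ v ∈ s, ((Multiset.map f Finset.univ.val).count v : ℝ) * v ^ p := by
    intro f p hsub
    set Mf := Multiset.map f Finset.univ.val with hMf
    have h1 : ∑ i, (f i) ^ p = (Mf.map (fun v => v ^ p)).sum := by
      rw [hMf, Multiset.map_map]
      rfl
    rw [h1, Finset.sum_multiset_map_count]
    rw [Finset.sum_subset hsub]
    · refine Finset.sum_congr rfl fun v hv => ?_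
      rw [nsmul_eq_mul]
    · intro v hv hvn
      rw [Multiset.count_eq_zero_of_notMem (fun h => hvn (Multiset.mem_toFinset.mpr h))]
      simp
  have hsub1 : M.toFinset ⊆ s := Finset.subset_union_left
  have hsub2 : M'.toFinset ⊆ s := Finset.subset_union_right
  have hseteq : {p : ℝ | ∑ i, (c i) ^ p = ∑ i, (e i) ^ p} =
      {p : ℝ | ∑ v ∈ s, a v * v ^ p = 0} := by
    ext p
    simp only [Set.mem_setOf_eq]
    rw [hkey c p hsub1, hkey e p hsub2, ← sub_eq_zero, ← Finset.sum_sub_distrib]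
    constructor <;> intro h <;> [skip; skip] <;>
      · convert h using 1
        refine Finset.sum_congr rfl fun v hv => ?_
        rw [ha]; ring
  have hane : ∃ v ∈ s, a v ≠ 0 := by
    by_contra hall
    push_neg at hall
    apply hne
    refine Multiset.ext.mpr fun b => ?_
    by_cases hb : b ∈ s
    · have := hall b hb
      rw [ha] at this
      have h2 : (M.count b : ℝ) = (M'.count b : ℝ) := by linarith [sub_eq_zero.mp this]
      exact_mod_cast h2
    · rw [hs, Finset.mem_union, Multiset.mem_toFinset, Multiset.mem_toFinset] at hb
      push_neg at hb
      rw [Multiset.count_eq_zero_of_notMem hb.1, Multiset.count_eq_zero_of_notMem hb.2]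
  have hscard : s.card ≤ 2 * N := by
    calc s.card ≤ M.toFinset.card + M'.toFinset.card := Finset.card_union_le _ _
      _ ≤ Multiset.card M + Multiset.card M' := by
          gcongr <;> exact Multiset.toFinset_card_le _
      _ = 2 * N := by
          rw [hM, hM', Multiset.card_map, Multiset.card_map]
          simp [two_mul]
  obtain ⟨hfin, hcard⟩ := aux_expsum s.card s rfl hpos a hane
  rw [hseteq]
  exact ⟨hfin, by omega⟩
end

section
/- There exists a universal constant C > 0 such that for every n ≥ 2 and m ≥ 1 the following holds. Suppose there are m triples (A^{(k)}, p^{(k)}, w^{(k)}) for k = 1, …, m, where each A^{(k)} is an n×n real matrix and p^{(k)}, w^{(k)} ∈ ℝ^n, together with witnesses r_1, …, r_m ∈ ℝ, such that for every subset T ⊆ {1, …, m} there exists γ_T ∈ [0, π/2] with owr_{γ_T}(A^{(k)}, p^{(k)}, w^{(k)}) > r_k if and only if k ∈ T. Then m ≤ C · log n. (That is, the pseudo-dimension of the class of outward-rotation rounding algorithms {owr_γ : γ ∈ [0, π/2]} on size-n instances is O(log n).) -/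
/-- `sgn x = 1` if `0 ≤ x`, and `-1` otherwise. -/
noncomputable def sgn (x : ℝ) : ℝ := if 0 ≤ x then 1 else -1

/-- The value of the `γ`-outward-rotation rounding:
`owr_γ(A,p,w) = Σ_{i,j} A i j · sgn(p_i cos γ + w_i sin γ) · sgn(p_j cos γ + w_j sin γ)`. -/
noncomputable def owr (n : ℕ) (γ : ℝ) (A : Fin n → Fin n → ℝ) (p w : Fin n → ℝ) : ℝ :=
  ∑ i, ∑ j, A i j * sgn (p i * Real.cos γ + w i * Real.sin γ) *
    sgn (p j * Real.cos γ + w j * Real.sin γ)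

private lemma conv_aux (P W x y z : ℝ) (hx : 0 ≤ x) (hxy : x ≤ y) (hyz : y ≤ z)
    (hz : z ≤ Real.pi / 2)
    (h1 : P * Real.cos x + W * Real.sin x < 0) (h2 : P * Real.cos z + W * Real.sin z < 0) :
    P * Real.cos y + W * Real.sin y < 0 := by
  rcases eq_or_lt_of_le hxy with rfl | hxy
  · exact h1
  rcases eq_or_lt_of_le hyz with rfl | hyz
  · exact h2
  have hpi := Real.pi_pos
  have key : Real.sin (z - y) * (P * Real.cos x + W * Real.sin x)
      + Real.sin (y - x) * (P * Real.cos z + W * Real.sin z)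
      = Real.sin (z - x) * (P * Real.cos y + W * Real.sin y) := by
    simp only [Real.sin_sub]
    ring
  have s1 : 0 < Real.sin (z - y) := Real.sin_pos_of_pos_of_lt_pi (by linarith) (by linarith)
  have s2 : 0 < Real.sin (y - x) := Real.sin_pos_of_pos_of_lt_pi (by linarith) (by linarith)
  have s3 : 0 ≤ Real.sin (z - x) := Real.sin_nonneg_of_nonneg_of_le_pi (by linarith) (by linarith)
  by_contra hy
  push_neg at hy
  linarith [mul_neg_of_pos_of_neg s1 h1, mul_neg_of_pos_of_neg s2 h2, mul_nonneg s3 hy]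

private lemma nine_sq_le (m : ℕ) (hm : 10 ≤ m) : 9 * m ^ 2 ≤ 2 ^ m := by
  induction m, hm using Nat.le_induction with
  | base => norm_num
  | succ k hk ih =>
    have h1 : 9 * (k + 1) ^ 2 ≤ 2 * (9 * k ^ 2) := by nlinarith
    calc 9 * (k + 1) ^ 2 ≤ 2 * (9 * k ^ 2) := h1
    _ ≤ 2 * 2 ^ k := by omega
    _ = 2 ^ (k + 1) := by ring


private lemma owr_congr {n m : ℕ} (A : Fin m → Fin n → Fin n → ℝ) (p w : Fin m → Fin n → ℝ)
    (γ γ' : ℝ)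
    (hb : ∀ k i, (0 ≤ p k i * Real.cos γ + w k i * Real.sin γ) ↔
        (0 ≤ p k i * Real.cos γ' + w k i * Real.sin γ')) (k : Fin m) :
    owr n γ (A k) (p k) (w k) = owr n γ' (A k) (p k) (w k) := by
  unfold owr
  have e : ∀ i, sgn (p k i * Real.cos γ + w k i * Real.sin γ)
      = sgn (p k i * Real.cos γ' + w k i * Real.sin γ') := by
    intro i; unfold sgn
    by_cases hc : 0 ≤ p k i * Real.cos γ + w k i * Real.sin γ
    · rw [if_pos hc, if_pos ((hb k i).1 hc)]
    · rw [if_neg hc, if_neg (fun hc' => hc ((hb k i).2 hc'))]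
  refine Finset.sum_congr rfl fun i _ => Finset.sum_congr rfl fun j _ => ?_
  rw [e i, e j]

theorem stmt_10 :
    ∃ C : ℝ, 0 < C ∧
      ∀ (n m : ℕ), 2 ≤ n → 1 ≤ m →
      ∀ (A : Fin m → Fin n → Fin n → ℝ) (p w : Fin m → Fin n → ℝ) (r : Fin m → ℝ),
        (∀ T : Finset (Fin m), ∃ γ ∈ Set.Icc (0 : ℝ) (Real.pi / 2),
          ∀ k : Fin m, (r k < owr n γ (A k) (p k) (w k) ↔ k ∈ T)) →
        (m : ℝ) ≤ C * Real.log n := by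
  classical
  refine ⟨15, by norm_num, ?_⟩
  intro n m hn hm A p w r h
  choose γf hγmem hγpat using h
  set b : ℝ → Fin m × Fin n → Bool :=
    fun γ c => decide (0 ≤ p c.1 c.2 * Real.cos γ + w c.1 c.2 * Real.sin γ) with hbdef
  have hbT : ∀ γ (c : Fin m × Fin n),
      b γ c = true ↔ 0 ≤ p c.1 c.2 * Real.cos γ + w c.1 c.2 * Real.sin γ := by
    intro γ c; simp [hbdef]
  have hbF : ∀ γ (c : Fin m × Fin n),
      b γ c = false ↔ p c.1 c.2 * Real.cos γ + w c.1 c.2 * Real.sin γ < 0 := by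
    intro γ c; simp [hbdef, not_le]
  have hTinj : ∀ T T' : Finset (Fin m), b (γf T) = b (γf T') → T = T' := by
    intro T T' hbb
    ext k
    have e := owr_congr A p w (γf T) (γf T')
      (fun k i => by
        have h2 := congrFun hbb (k, i)
        simpa [hbdef, decide_eq_decide] using h2) k
    rw [← hγpat T k, e, hγpat T' k]
  have hγinj : Function.Injective γf := fun T T' e => hTinj T T' (by rw [e])
  set G : Finset ℝ := Finset.image γf Finset.univ with hGdef
  have hKcard : G.card = 2 ^ m := by
    rw [hGdef, Finset.card_image_of_injective _ hγinj, Finset.card_univ, Fintype.card_finset,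
      Fintype.card_fin]
  set g : Fin G.card → ℝ := fun j => ((G.orderIsoOfFin rfl j : {x // x ∈ G}) : ℝ) with hgdef
  have hgmono : StrictMono g := fun a b' hab =>
    Subtype.coe_lt_coe.mpr ((G.orderIsoOfFin rfl).strictMono hab)
  have hgmem : ∀ j, g j ∈ G := fun j => ((G.orderIsoOfFin rfl) j).2
  have hGicc : ∀ u ∈ G, u ∈ Set.Icc (0 : ℝ) (Real.pi / 2) := by
    intro u hu
    rw [hGdef] at hu
    obtain ⟨T, _, rfl⟩ := Finset.mem_image.mp hu
    exact hγmem T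
  have hbg_inj : ∀ j j' : Fin G.card, b (g j) = b (g j') → j = j' := by
    intro j j' hbb
    obtain ⟨T, _, hT⟩ := Finset.mem_image.mp (hGdef ▸ hgmem j)
    obtain ⟨T', _, hT'⟩ := Finset.mem_image.mp (hGdef ▸ hgmem j')
    have hTT : T = T' := hTinj T T' (by rw [hT, hT', hbb])
    exact hgmono.injective (by rw [← hT, ← hT', hTT])
  -- change witnesses
  have hcons : ∀ (j : ℕ) (hj : j + 1 < G.card),
      ∃ c, b (g ⟨j, by omega⟩) c ≠ b (g ⟨j + 1, hj⟩) c := by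
    intro j hj
    by_contra hcon
    push_neg at hcon
    have := hbg_inj ⟨j, by omega⟩ ⟨j + 1, hj⟩ (funext hcon)
    simp [Fin.ext_iff] at this
  choose C hC using hcons
  set φ : ℕ → (Fin m × Fin n) × Bool := fun j =>
    if hj : j + 1 < G.card then (C j hj, b (g ⟨j, by omega⟩) (C j hj))
    else ((⟨0, by omega⟩, ⟨0, by omega⟩), true) with hφdef
  have hφne : ∀ j1 j2 : ℕ, j1 < j2 → j2 + 1 < G.card → φ j1 ≠ φ j2 := by
    intro j1 j2 h12 hj2 he
    have hj1 : j1 + 1 < G.card := by omega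
    rw [hφdef] at he
    simp only [dif_pos hj1, dif_pos hj2, Prod.mk.injEq] at he
    obtain ⟨hc, hd⟩ := he
    set c := C j1 hj1 with hcdef
    have h1 := hC j1 hj1
    have h2 := hC j2 hj2
    rw [← hc] at h2 hd
    -- order of the four points
    have hle01 : g ⟨j1, by omega⟩ < g ⟨j1 + 1, hj1⟩ := hgmono (by simp [Fin.lt_def])
    have hle12 : g ⟨j1 + 1, hj1⟩ ≤ g ⟨j2, by omega⟩ := hgmono.monotone (by simp [Fin.le_def]; omega)
    have hle23 : g ⟨j2, by omega⟩ < g ⟨j2 + 1, hj2⟩ := hgmono (by simp [Fin.lt_def])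
    have hm0 := hGicc _ (hgmem ⟨j1, by omega⟩)
    have hm1 := hGicc _ (hgmem ⟨j1 + 1, hj1⟩)
    have hm2 := hGicc _ (hgmem ⟨j2, by omega⟩)
    have hm3 := hGicc _ (hgmem ⟨j2 + 1, hj2⟩)
    rcases Bool.eq_false_or_eq_true (b (g ⟨j1, by omega⟩) c) with hd0 | hd0
    · -- d = true : x1, x3 negative, x2 positive
      have hd2 : b (g ⟨j2, by omega⟩) c = true := by rw [← hd]; exact hd0
      have hd1 : b (g ⟨j1 + 1, hj1⟩) c = false := by
        rcases Bool.eq_false_or_eq_true (b (g ⟨j1 + 1, hj1⟩) c) with h' | h'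
        · exact absurd (hd0.trans h'.symm) h1
        · exact h'
      have hd3 : b (g ⟨j2 + 1, hj2⟩) c = false := by
        rcases Bool.eq_false_or_eq_true (b (g ⟨j2 + 1, hj2⟩) c) with h' | h'
        · exact absurd (hd2.trans h'.symm) h2
        · exact h'
      have f1 := (hbF _ c).1 hd1
      have f3 := (hbF _ c).1 hd3
      have f2 := conv_aux (p c.1 c.2) (w c.1 c.2) _ _ _ hm1.1 hle12 hle23.le hm3.2 f1 f3
      exact absurd ((hbT _ c).1 hd2) (not_le.mpr f2)
    · -- d = false : x0, x2 negative, x1 positive -- contradiction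
      have hd2 : b (g ⟨j2, by omega⟩) c = false := by rw [← hd]; exact hd0
      have hd1 : b (g ⟨j1 + 1, hj1⟩) c = true := by
        rcases Bool.eq_false_or_eq_true (b (g ⟨j1 + 1, hj1⟩) c) with h' | h'
        · exact h'
        · exact absurd (hd0.trans h'.symm) h1
      have f0 := (hbF _ c).1 hd0
      have f2 := (hbF _ c).1 hd2
      have f1 := conv_aux (p c.1 c.2) (w c.1 c.2) _ _ _ hm0.1 hle01.le hle12 hm2.2 f0 f2
      exact absurd ((hbT _ c).1 hd1) (not_le.mpr f1)
  have hcount : G.card - 1 ≤ 2 * (m * n) := by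
    have hinj : Set.InjOn φ ↑(Finset.range (G.card - 1)) := by
      intro j1 h1 j2 h2 he
      simp only [Finset.coe_range, Set.mem_Iio] at h1 h2
      rcases lt_trichotomy j1 j2 with hlt | heq | hgt
      · exact absurd he (hφne j1 j2 hlt (by omega))
      · exact heq
      · exact absurd he.symm (hφne j2 j1 hgt (by omega))
    have hle := Finset.card_le_card_of_injOn φ
      (fun a _ => Finset.mem_univ (φ a)) hinj
    simpa [Fintype.card_prod, mul_comm, mul_assoc, mul_left_comm] using hle
  have hKpos : 1 ≤ G.card := hKcard ▸ Nat.one_le_two_pow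
  have hmain : 2 ^ m ≤ 2 * (m * n) + 1 := by omega
  -- arithmetic
  have hlog2pos := Real.log_two_gt_d9
  have hlogn : Real.log 2 ≤ Real.log n := Real.log_le_log (by norm_num) (by exact_mod_cast hn)
  have hlognpos : 0 < Real.log n := by linarith
  rcases lt_or_ge m 10 with hm10 | hm10
  · have : (m : ℝ) ≤ 10 := by exact_mod_cast hm10.le
    nlinarith
  · have h9 := nine_sq_le m hm10
    have h3 : 2 ^ m ≤ 3 * (m * n) := by nlinarith
    have hsq : 2 ^ m * 2 ^ m ≤ 2 ^ m * n ^ 2 := by nlinarith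
    have hn2 : 2 ^ m ≤ n ^ 2 := Nat.le_of_mul_le_mul_left hsq (Nat.pow_pos (n := m) (by norm_num))
    have hr : (m : ℝ) * Real.log 2 ≤ 2 * Real.log n := by
      have := Real.log_le_log (x := (2 : ℝ) ^ m) (by positivity)
        (by exact_mod_cast hn2 : (2 : ℝ) ^ m ≤ (n : ℝ) ^ 2)
      rwa [Real.log_pow, Real.log_pow] at this
    have hm0 : (0 : ℝ) ≤ m := Nat.cast_nonneg m
    nlinarith
end

section
/- There exists a universal constant C > 0 such that for every n ≥ 2 and m ≥ 1 the following holds. Suppose there are m triples (A^{(k)}, y^{(k)}, q^{(k)}) for k = 1, …, m, where each A^{(k)} is an n×n real matrix and y^{(k)}, q^{(k)} ∈ ℝ^n, together with witnesses r_1, …, r_m ∈ ℝ, such that for every subset T ⊆ {1, …, m} there exists s_T > 0 with rprt_{s_T}(A^{(k)}, y^{(k)}, q^{(k)}) > r_k if and only if k ∈ T. Then m ≤ C · log n. (That is, the pseudo-dimension of the class of Randomized Projection Randomized Thresholding algorithms {rprt_s : s > 0} on size-n instances is O(log n).) -/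
/-- The value of the Randomized Projection Randomized Thresholding assignment:
`rprt_s(A,y,q) = Σ_{i,j} A i j · sgn(q_i − s·y_i) · sgn(q_j − s·y_j)`. -/
noncomputable def rprt (n : ℕ) (s : ℝ) (A : Fin n → Fin n → ℝ) (y q : Fin n → ℝ) : ℝ :=
  ∑ i, ∑ j, A i j * sgn (q i - s * y i) * sgn (q j - s * y j)

private lemma bool_flip4 {a b c d : Bool} (hab : a ≠ b) (hcd : c ≠ d)
    (h1 : a ≤ b) (h2 : b ≤ c) (h3 : c ≤ d) : False := by
  revert hab hcd h1 h2 h3; cases a <;> cases b <;> cases c <;> cases d <;> decide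

private lemma decide_le' {p q : Prop} [Decidable p] [Decidable q] (h : p → q) :
    decide p ≤ decide q := by
  by_cases hp : p
  · simp [hp, h hp]
  · simp [hp]

private lemma pattern_count {ι : Type*} [Fintype ι] (f : ℝ → ι → Bool)
    (hm : ∀ d : ι, (∀ ⦃s t : ℝ⦄, s ≤ t → f s d ≤ f t d) ∨ (∀ ⦃s t : ℝ⦄, s ≤ t → f t d ≤ f s d))
    (V : Finset (ι → Bool)) (hV : ∀ v ∈ V, ∃ s : ℝ, f s = v) :
    V.card ≤ Fintype.card ι + 1 := by
  classical
  set rep : (ι → Bool) → ℝ := fun v => if h : ∃ s, f s = v then h.choose else 0 with hrep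
  have hrep_spec : ∀ v ∈ V, f (rep v) = v := by
    intro v hv
    have h := hV v hv
    simp only [hrep, dif_pos h]
    exact h.choose_spec
  set S : Finset ℝ := V.image rep with hS
  have hinj : Set.InjOn rep V := fun a ha b hb hab => by
    rw [← hrep_spec a ha, ← hrep_spec b hb, hab]
  have hcard : S.card = V.card := Finset.card_image_of_injOn hinj
  have hdist : ∀ a ∈ S, ∀ b ∈ S, a ≠ b → f a ≠ f b := by
    intro a ha b hb hab hfab
    obtain ⟨va, hva, rfl⟩ := Finset.mem_image.mp ha
    obtain ⟨vb, hvb, rfl⟩ := Finset.mem_image.mp hb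
    rw [hrep_spec va hva, hrep_spec vb hvb] at hfab
    exact hab (by rw [hfab])
  set l := S.sort (· ≤ ·) with hl
  have hlen : l.length = S.card := Finset.length_sort _
  have hsorted : StrictMono l.get := (S.sortedLT_sort).strictMono_get
  have hadj : ∀ j : Fin (l.length - 1), ∃ d : ι,
      f (l.get ⟨j, by omega⟩) d ≠ f (l.get ⟨j + 1, by omega⟩) d := by
    intro j
    have hlt : (⟨(j : ℕ), by omega⟩ : Fin l.length) < ⟨j + 1, by omega⟩ := by
      simp [Fin.lt_def]
    have hne : l.get ⟨j, by omega⟩ ≠ l.get ⟨j + 1, by omega⟩ := ne_of_lt (hsorted hlt)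
    have hmem : ∀ i : Fin l.length, l.get i ∈ S := fun i =>
      (Finset.mem_sort _).mp (l.get_mem i)
    exact Function.ne_iff.mp (hdist _ (hmem _) _ (hmem _) hne)
  set g : Fin (l.length - 1) → ι := fun j => (hadj j).choose with hg
  have hgspec : ∀ j : Fin (l.length - 1),
      f (l.get ⟨j, by omega⟩) (g j) ≠ f (l.get ⟨j + 1, by omega⟩) (g j) :=
    fun j => (hadj j).choose_spec
  have hkey : ∀ j1 j2 : Fin (l.length - 1), (j1 : ℕ) < j2 → g j1 ≠ g j2 := by
    intro j1 j2 hj heq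
    set d := g j1 with hd
    have h1 := hgspec j1
    have h2 := hgspec j2
    rw [← heq] at h2
    have mono12 : ∀ (i1 i2 : Fin l.length), (i1 : ℕ) ≤ i2 → l.get i1 ≤ l.get i2 := by
      intro i1 i2 h
      rcases eq_or_lt_of_le h with h' | h'
      · exact le_of_eq (congrArg l.get (Fin.ext h'))
      · exact le_of_lt (hsorted (Fin.lt_def.mpr h'))
    have o1 : l.get ⟨j1, by omega⟩ ≤ l.get (⟨j1 + 1, by omega⟩ : Fin l.length) :=
      mono12 _ _ (by simp)
    have o2 : l.get (⟨j1 + 1, by omega⟩ : Fin l.length) ≤ l.get ⟨j2, by omega⟩ :=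
      mono12 _ _ (by simp; omega)
    have o3 : l.get (⟨j2, by omega⟩ : Fin l.length) ≤ l.get ⟨j2 + 1, by omega⟩ :=
      mono12 _ _ (by simp)
    rcases hm d with hmono | hanti
    · exact bool_flip4 h1 h2 (hmono o1) (hmono o2) (hmono o3)
    · exact bool_flip4 (Ne.symm h2) (Ne.symm h1) (hanti o3) (hanti o2) (hanti o1)
  have ginj : Function.Injective g := by
    intro j1 j2 h
    by_contra hne
    rcases lt_or_gt_of_ne (fun hc : (j1 : ℕ) = j2 => hne (Fin.ext hc)) with h' | h'
    · exact hkey j1 j2 h' h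
    · exact hkey j2 j1 h' h.symm
  have := Fintype.card_le_of_injective g ginj
  simp [Fintype.card_fin] at this
  omega

private lemma half_le (m : ℕ) : m ≤ 2 ^ ((m + 1) / 2) := by
  induction m using Nat.strong_induction_on with
  | _ m ih =>
    match m with
    | 0 => simp
    | 1 => simp
    | 2 => norm_num
    | 3 => norm_num
    | (k + 4) =>
      have h1 := ih (k + 2) (by omega)
      have h3 : (k + 4 + 1) / 2 = (k + 2 + 1) / 2 + 1 := by omega
      rw [h3, pow_succ]
      omega

theorem stmt_12 :
    ∃ C : ℝ, 0 < C ∧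
      ∀ (n m : ℕ), 2 ≤ n → 1 ≤ m →
      ∀ (A : Fin m → Fin n → Fin n → ℝ) (y q : Fin m → Fin n → ℝ) (r : Fin m → ℝ),
        (∀ T : Finset (Fin m), ∃ s : ℝ, 0 < s ∧
          ∀ k : Fin m, (r k < rprt n s (A k) (y k) (q k) ↔ k ∈ T)) →
        (m : ℝ) ≤ C * Real.log n := by
  classical
  refine ⟨5 / Real.log 2, div_pos (by norm_num) (Real.log_pos one_lt_two), ?_⟩
  intro n m hn hm A y q r h
  -- the sign-pattern function
  set f : ℝ → (Fin m × Fin n) → Bool :=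
    fun s d => decide (0 ≤ q d.1 d.2 - s * y d.1 d.2) with hf
  have hmono : ∀ d : Fin m × Fin n,
      (∀ ⦃s t : ℝ⦄, s ≤ t → f s d ≤ f t d) ∨ (∀ ⦃s t : ℝ⦄, s ≤ t → f t d ≤ f s d) := by
    intro d
    rcases le_or_gt 0 (y d.1 d.2) with hy | hy
    · right
      intro s t hst
      exact decide_le' fun hle => le_trans hle (by nlinarith)
    · left
      intro s t hst
      exact decide_le' fun hle => le_trans hle (by nlinarith)
  -- patterns determine values
  have hval : ∀ s s' : ℝ, f s = f s' →
      ∀ k, rprt n s (A k) (y k) (q k) = rprt n s' (A k) (y k) (q k) := by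
    intro s s' hss k
    have hsgn : ∀ i, sgn (q k i - s * y k i) = sgn (q k i - s' * y k i) := by
      intro i
      have hd : decide (0 ≤ q k i - s * y k i) = decide (0 ≤ q k i - s' * y k i) :=
        congrFun hss (k, i)
      have hiff := decide_eq_decide.mp hd
      unfold sgn
      exact if_congr hiff rfl rfl
    unfold rprt
    exact Finset.sum_congr rfl fun i _ => Finset.sum_congr rfl fun j _ => by
      rw [hsgn i, hsgn j]
  -- the injection from subsets to patterns
  set sel : Finset (Fin m) → ℝ := fun T => (h T).choose with hsel
  have hsel_spec : ∀ T, ∀ k : Fin m,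
      (r k < rprt n (sel T) (A k) (y k) (q k) ↔ k ∈ T) :=
    fun T => (h T).choose_spec.2
  set Φ : Finset (Fin m) → ((Fin m × Fin n) → Bool) := fun T => f (sel T) with hΦ
  have hΦinj : Function.Injective Φ := by
    intro T T' hTT
    ext k
    rw [← hsel_spec T k, ← hsel_spec T' k, hval _ _ hTT k]
  set V : Finset ((Fin m × Fin n) → Bool) := Finset.image Φ Finset.univ with hV
  have hVcard : V.card = 2 ^ m := by
    rw [hV, Finset.card_image_of_injective _ hΦinj, Finset.card_univ,
      Fintype.card_finset, Fintype.card_fin]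
  have hVmem : ∀ v ∈ V, ∃ s : ℝ, f s = v := by
    intro v hv
    obtain ⟨T, _, rfl⟩ := Finset.mem_image.mp hv
    exact ⟨sel T, rfl⟩
  have hcount : 2 ^ m ≤ m * n + 1 := by
    have := pattern_count f hmono V hVmem
    rwa [hVcard, Fintype.card_prod, Fintype.card_fin, Fintype.card_fin] at this
  -- arithmetic: 2^(m/2) ≤ n^2
  have hmn1 : 1 ≤ m * n := Nat.one_le_iff_ne_zero.mpr (by positivity)
  have hstep : 2 ^ m ≤ 2 * (m * n) := by omega
  have hsplit : 2 ^ (m / 2) * 2 ^ ((m + 1) / 2) = 2 ^ m := by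
    rw [← pow_add]; congr 1; omega
  have hb : 2 ^ (m / 2) * 2 ^ ((m + 1) / 2) ≤ (2 * n) * 2 ^ ((m + 1) / 2) := by
    rw [hsplit]
    calc 2 ^ m ≤ 2 * (m * n) := hstep
      _ = (2 * n) * m := by ring
      _ ≤ (2 * n) * 2 ^ ((m + 1) / 2) := Nat.mul_le_mul_left _ (half_le m)
  have hc : 2 ^ (m / 2) ≤ 2 * n :=
    Nat.le_of_mul_le_mul_right hb (Nat.pow_pos (by norm_num))
  have hd : 2 ^ (m / 2) ≤ n ^ 2 := le_trans hc (by nlinarith)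
  -- transfer to real logs
  have hreal : ((m / 2 : ℕ) : ℝ) * Real.log 2 ≤ 2 * Real.log n := by
    have hcast : ((2 : ℝ)) ^ (m / 2 : ℕ) ≤ ((n : ℝ)) ^ 2 := by
      have := (Nat.cast_le (α := ℝ)).mpr hd
      push_cast at this
      exact this
    have hlog := Real.log_le_log (by positivity) hcast
    rwa [Real.log_pow, Real.log_pow] at hlog
  have hlog2pos : (0 : ℝ) < Real.log 2 := Real.log_pos one_lt_two
  have hlog2n : Real.log 2 ≤ Real.log n :=
    Real.log_le_log (by norm_num) (by exact_mod_cast hn)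
  have hmcast : (m : ℝ) ≤ 2 * ((m / 2 : ℕ) : ℝ) + 1 := by
    have : m ≤ 2 * (m / 2) + 1 := by omega
    exact_mod_cast this
  rw [div_mul_eq_mul_div, le_div_iff₀ hlog2pos]
  calc (m : ℝ) * Real.log 2 ≤ (2 * ((m / 2 : ℕ) : ℝ) + 1) * Real.log 2 :=
        mul_le_mul_of_nonneg_right hmcast hlog2pos.le
    _ = 2 * (((m / 2 : ℕ) : ℝ) * Real.log 2) + Real.log 2 := by ring
    _ ≤ 2 * (2 * Real.log n) + Real.log n := by
        have := hreal
        nlinarith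
    _ = 5 * Real.log n := by ring
end

section
/- There exists a constant c > 0 such that for every sufficiently large n there exist a natural number m with m ≥ c · log n, an n×n real symmetric matrix A with nonnegative entries and zero diagonal, vectors y^{(1)}, …, y^{(m)} ∈ ℝ^n and q^{(1)}, …, q^{(m)} ∈ ℝ^n, and witnesses r_1, …, r_m ∈ ℝ, such that for every subset T ⊆ {1, …, m} there exists s_T > 0 with rprt_{s_T}(A, y^{(j)}, q^{(j)}) > r_j if and only if j ∈ T. (That is, the pseudo-dimension of the class of Randomized Projection Randomized Thresholding algorithms {rprt_s : s > 0} on size-n instances is Ω(log n).) -/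
/-! ### Auxiliary lemmas -/

lemma sgn_mul_self (x : ℝ) : sgn x * sgn x = 1 := by
  unfold sgn; split <;> norm_num

lemma sum_range_two_pow_lt (n : ℕ) : ∑ i ∈ Finset.range n, 2^i < 2^n := by
  induction n with
  | zero => simp
  | succ n ih => rw [Finset.sum_range_succ, pow_succ]; omega

/-- The `b`-th binary digit of a sum of distinct powers of two. -/
lemma two_pow_sum_div (s : Finset ℕ) (b : ℕ) :
    (∑ a ∈ s, 2^a) / 2^b % 2 = if b ∈ s then 1 else 0 := by
  classical
  set e : ℕ := if b ∈ s then 1 else 0 with he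
  set H : ℕ := ∑ a ∈ s.filter (b < ·), 2^(a - b - 1) with hH
  have hsplit : ∑ a ∈ s, 2^a
      = (∑ a ∈ s.filter (· < b), 2^a) + 2^b * (e + 2 * H) := by
    rw [← Finset.sum_filter_add_sum_filter_not s (· < b)]
    congr 1
    have hset : s.filter (fun a => ¬ a < b)
        = s.filter (fun a => a = b) ∪ s.filter (fun a => b < a) := by
      ext a
      by_cases hab : a ∈ s <;> simp only [Finset.mem_filter, Finset.mem_union, hab,
        true_and, false_and, or_self, iff_self, false_or] <;> omega
    have hdisj : Disjoint (s.filter (fun a => a = b)) (s.filter (fun a => b < a)) := by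
      simp only [Finset.disjoint_left, Finset.mem_filter]; omega
    rw [hset, Finset.sum_union hdisj]
    have h1 : ∑ a ∈ s.filter (fun a => a = b), 2^a = 2^b * e := by
      by_cases hb : b ∈ s
      · have : s.filter (fun a => a = b) = {b} := by
          ext a; simp only [Finset.mem_filter, Finset.mem_singleton]
          constructor
          · tauto
          · rintro rfl; exact ⟨hb, rfl⟩
        rw [this]; simp [he, hb]
      · have : s.filter (fun a => a = b) = ∅ := by
          ext a; simp only [Finset.mem_filter, Finset.notMem_empty, iff_false]
          rintro ⟨ha, rfl⟩; exact hb ha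
        rw [this]; simp [he, hb]
    have h2 : ∑ a ∈ s.filter (fun a => b < a), 2^a = 2^b * (2 * H) := by
      rw [hH, Finset.mul_sum, Finset.mul_sum]
      apply Finset.sum_congr rfl
      intro a ha
      simp only [Finset.mem_filter] at ha
      rw [← pow_succ', ← pow_add]
      congr 1
      omega
    rw [h1, h2]; ring
  have hlo : (∑ a ∈ s.filter (· < b), 2^a) < 2^b := by
    calc (∑ a ∈ s.filter (· < b), 2^a) ≤ ∑ a ∈ Finset.range b, 2^a := by
          apply Finset.sum_le_sum_of_subset
          intro a ha
          simp only [Finset.mem_filter] at ha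
          simpa using ha.2
      _ < 2^b := sum_range_two_pow_lt b
  rw [hsplit, Nat.add_mul_div_left _ _ (pow_pos (by norm_num) b),
    Nat.div_eq_of_lt hlo, Nat.zero_add]
  by_cases hb : b ∈ s <;> simp [he, hb, Nat.add_mul_mod_self_left]

lemma altsum (v : ℕ) :
    ∑ k ∈ Finset.Icc 1 v, (if Odd k then (1:ℝ) else -1) = if Odd v then 1 else 0 := by
  induction v with
  | zero => simp
  | succ v ih =>
    rw [Finset.sum_Icc_succ_top (by omega), ih]
    rcases Nat.even_or_odd v with h | h
    · simp [Nat.odd_add_one, h, Nat.not_odd_iff_even.mpr h]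
    · simp [Nat.odd_add_one, h, Nat.not_odd_iff_even]

lemma sgn_eval_pos (t kk : ℕ) : sgn (((t:ℝ) + 1/2) - (kk:ℝ)) = if kk ≤ t then 1 else -1 := by
  unfold sgn
  by_cases h : kk ≤ t
  · rw [if_pos, if_pos h]
    have : (kk:ℝ) ≤ t := by exact_mod_cast h
    linarith
  · rw [if_neg, if_neg h]
    push_neg at h
    have : (t:ℝ) + 1 ≤ kk := by exact_mod_cast h
    intro hc
    linarith

lemma sgn_eval_neg (t kk : ℕ) : sgn ((kk:ℝ) - ((t:ℝ) + 1/2)) = if t < kk then 1 else -1 := by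
  unfold sgn
  by_cases h : t < kk
  · rw [if_pos, if_pos h]
    have : (t:ℝ) + 1 ≤ kk := by exact_mod_cast h
    linarith
  · rw [if_neg, if_neg h]
    push_neg at h
    have : (kk:ℝ) ≤ t := by exact_mod_cast h
    intro hc
    linarith

lemma sum_fin_ite {n C : ℕ} (hC : C < n) (g : ℕ → ℝ) :
    ∑ i : Fin n, (if 1 ≤ (i:ℕ) ∧ (i:ℕ) ≤ C then g (i:ℕ) else 0)
      = ∑ k ∈ Finset.Icc 1 C, g k := by
  rw [Fin.sum_univ_eq_sum_range (fun k => if 1 ≤ k ∧ k ≤ C then g k else 0) n]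
  rw [← Finset.sum_filter]
  apply Finset.sum_congr _ (fun _ _ => rfl)
  ext k
  simp only [Finset.mem_filter, Finset.mem_range, Finset.mem_Icc]
  omega

/-- The hard instance: complete graph (with unit weights) on vertices `1,…,C`. -/
noncomputable def myA (n C : ℕ) : Fin n → Fin n → ℝ := fun i k =>
  if i = k then 0 else
    (if 1 ≤ (i:ℕ) ∧ (i:ℕ) ≤ C then (1:ℝ) else 0) *
    (if 1 ≤ (k:ℕ) ∧ (k:ℕ) ≤ C then (1:ℝ) else 0)

/-- Projections: alternating signs. -/
noncomputable def myY (n : ℕ) : Fin n → ℝ := fun i => if Odd (i:ℕ) then (-1:ℝ) else 1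

/-- Thresholds: flip points at multiples of `2^e`. -/
noncomputable def myQ (n : ℕ) (e : ℕ) : Fin n → ℝ := fun i =>
  if Odd (i:ℕ) then -(((i:ℕ):ℝ) * 2^e) else ((i:ℕ):ℝ) * 2^e

lemma rprt_formula (n C : ℕ) (hCn : C < n) (yy qq : ℕ → ℝ) (s : ℝ) :
    rprt n s
      (fun i k => if i = k then 0 else
        (if 1 ≤ (i:ℕ) ∧ (i:ℕ) ≤ C then (1:ℝ) else 0) *
        (if 1 ≤ (k:ℕ) ∧ (k:ℕ) ≤ C then (1:ℝ) else 0))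
      (fun i => yy (i:ℕ)) (fun i => qq (i:ℕ))
    = (∑ k ∈ Finset.Icc 1 C, sgn (qq k - s * yy k))^2 - C := by
  classical
  set σ : Fin n → ℝ := fun i => sgn (qq (i:ℕ) - s * yy (i:ℕ)) with hσ
  set f : Fin n → ℝ := fun i =>
    (if 1 ≤ (i:ℕ) ∧ (i:ℕ) ≤ C then (1:ℝ) else 0) * σ i with hf
  have h1 : ∀ i k : Fin n,
      (if i = k then (0:ℝ) else
        (if 1 ≤ (i:ℕ) ∧ (i:ℕ) ≤ C then (1:ℝ) else 0) *
        (if 1 ≤ (k:ℕ) ∧ (k:ℕ) ≤ C then (1:ℝ) else 0)) * σ i * σ k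
      = f i * f k - (if i = k then f i * f k else 0) := by
    intro i k
    by_cases h : i = k
    · simp [h]
    · simp only [h, if_neg h, if_false, hf]
      ring
  have h2 : rprt n s
      (fun i k => if i = k then 0 else
        (if 1 ≤ (i:ℕ) ∧ (i:ℕ) ≤ C then (1:ℝ) else 0) *
        (if 1 ≤ (k:ℕ) ∧ (k:ℕ) ≤ C then (1:ℝ) else 0))
      (fun i => yy (i:ℕ)) (fun i => qq (i:ℕ))
      = ∑ i, ∑ k, (f i * f k - (if i = k then f i * f k else 0)) := by
    unfold rprt
    exact Finset.sum_congr rfl fun i _ => Finset.sum_congr rfl fun k _ => h1 i k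
  rw [h2]
  have h3 : ∑ i, ∑ k, (f i * f k - (if i = k then f i * f k else 0))
      = (∑ i, f i)^2 - ∑ i, f i * f i := by
    simp only [Finset.sum_sub_distrib]
    congr 1
    · rw [sq, Finset.sum_mul_sum]
    · apply Finset.sum_congr rfl
      intro i _
      rw [Finset.sum_ite_eq]
      simp
  rw [h3]
  have h4 : ∀ i : Fin n, f i * f i = (if 1 ≤ (i:ℕ) ∧ (i:ℕ) ≤ C then (1:ℝ) else 0) := by
    intro i
    by_cases h : 1 ≤ (i:ℕ) ∧ (i:ℕ) ≤ C <;> simp [hf, h, hσ]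
    rw [sgn_mul_self]
  have h5 : ∑ i, f i * f i = (C : ℝ) := by
    rw [Finset.sum_congr rfl fun i _ => h4 i]
    have := sum_fin_ite hCn (fun _ => (1:ℝ))
    rw [this]
    simp
  have h6 : ∑ i, f i = ∑ k ∈ Finset.Icc 1 C, sgn (qq k - s * yy k) := by
    rw [← sum_fin_ite hCn (fun k => sgn (qq k - s * yy k))]
    apply Finset.sum_congr rfl
    intro i _
    simp [hf, hσ, ite_mul, zero_mul, one_mul]
  rw [h5, h6]

lemma main_eval (n C m : ℕ) (hCn : C < n) (hm : 1 ≤ m) (hC : C = 2^m)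
    (t : ℕ) (htC : t < C) (e : ℕ) :
    rprt n ((t:ℝ) + 1/2) (myA n C) (myY n) (myQ n e)
    = (2 * (if Odd (t / 2^e) then (1:ℝ) else 0))^2 - C := by
  classical
  have hr : rprt n ((t:ℝ) + 1/2) (myA n C) (myY n) (myQ n e)
      = (∑ k ∈ Finset.Icc 1 C,
          sgn ((if Odd k then -((k:ℝ)*2^e) else (k:ℝ)*2^e)
            - ((t:ℝ) + 1/2) * (if Odd k then (-1:ℝ) else 1)))^2 - C :=
    rprt_formula n C hCn (fun k => if Odd k then (-1:ℝ) else 1)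
      (fun k => if Odd k then -((k:ℝ)*2^e) else (k:ℝ)*2^e) ((t:ℝ) + 1/2)
  rw [hr]
  set u := t / 2^e with hu
  have huC : u ≤ C := le_trans (Nat.div_le_self t _) htC.le
  have hk2 : ∀ k : ℕ, k ≤ u ↔ k * 2^e ≤ t := by
    intro k
    rw [hu]
    exact Nat.le_div_iff_mul_le (show 0 < 2^e from pow_pos (by norm_num) e)
  have hterm : ∀ k ∈ Finset.Icc 1 C,
      sgn ((if Odd k then -((k:ℝ)*2^e) else (k:ℝ)*2^e)
        - ((t:ℝ) + 1/2) * (if Odd k then (-1:ℝ) else 1))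
      = 2 * (if k ≤ u then (if Odd k then (1:ℝ) else -1) else 0)
        - (if Odd k then (1:ℝ) else -1) := by
    intro k _
    by_cases ho : Odd k
    · rw [if_pos ho, if_pos ho]
      have e1 : -((k:ℝ)*2^e) - ((t:ℝ)+1/2) * (-1)
          = ((t:ℝ) + 1/2) - ((k * 2^e : ℕ):ℝ) := by push_cast; ring
      rw [e1, sgn_eval_pos]
      by_cases hle : k * 2^e ≤ t <;> simp [ho, hk2 k, hle] <;> norm_num
    · rw [if_neg ho, if_neg ho]
      have e2 : (k:ℝ)*2^e - ((t:ℝ)+1/2) * 1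
          = ((k * 2^e : ℕ):ℝ) - ((t:ℝ) + 1/2) := by push_cast; ring
      rw [e2, sgn_eval_neg]
      by_cases hle : k * 2^e ≤ t <;>
        simp [ho, hk2 k, hle, Nat.lt_iff_add_one_le, Nat.not_le.symm] <;>
        first
          | norm_num
          | (rw [if_neg (by omega), if_neg (by omega)] <;> norm_num)
          | (rw [if_pos (by omega), if_pos (by omega)] <;> norm_num)
  rw [Finset.sum_congr rfl hterm, Finset.sum_sub_distrib]
  have hA : ∑ k ∈ Finset.Icc 1 C, (2 * (if k ≤ u then (if Odd k then (1:ℝ) else -1) else 0))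
      = 2 * (if Odd u then (1:ℝ) else 0) := by
    rw [← Finset.mul_sum]
    congr 1
    have hfilter : (Finset.Icc 1 C).filter (fun k => k ≤ u) = Finset.Icc 1 u := by
      ext x
      simp only [Finset.mem_filter, Finset.mem_Icc]
      omega
    rw [← Finset.sum_filter, hfilter, altsum]
  have hB : ∑ k ∈ Finset.Icc 1 C, (if Odd k then (1:ℝ) else -1) = 0 := by
    rw [altsum, if_neg]
    rw [Nat.odd_iff, hC]
    have : 2^m % 2 = 0 := by
      have : (2:ℕ) ∣ 2^m := dvd_pow_self 2 (by omega)
      omega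
    omega
  rw [hA, hB, sub_zero]

theorem stmt_13 :
    ∃ c : ℝ, 0 < c ∧ ∃ N : ℕ, ∀ n : ℕ, N ≤ n →
      ∃ m : ℕ, c * Real.log n ≤ (m : ℝ) ∧
        ∃ (A : Fin n → Fin n → ℝ) (y q : Fin m → Fin n → ℝ) (r : Fin m → ℝ),
          (∀ i j, A i j = A j i) ∧ (∀ i j, 0 ≤ A i j) ∧ (∀ i, A i i = 0) ∧
          ∀ T : Finset (Fin m), ∃ s : ℝ, 0 < s ∧
            ∀ j : Fin m, (r j < rprt n s A (y j) (q j) ↔ j ∈ T) := by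
  classical
  have hlog2 : (0:ℝ) < Real.log 2 := Real.log_pos (by norm_num)
  refine ⟨1 / (2 * Real.log 2), by positivity, 16, fun n hn => ?_⟩
  have hn0 : n ≠ 0 := by omega
  set m : ℕ := Nat.log 2 n - 1 with hmdef
  have hL4 : 4 ≤ Nat.log 2 n :=
    (Nat.le_log_iff_pow_le (by norm_num) hn0).mpr (by norm_num; omega)
  have hm3 : 3 ≤ m := by omega
  have hm1 : m + 1 = Nat.log 2 n := by omega
  set C : ℕ := 2^m with hCdef
  have hCpos : 0 < C := pow_pos (by norm_num) m
  have hCn : C < n := by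
    have h1 : 2^(m+1) ≤ n := by
      rw [hm1]; exact Nat.pow_log_le_self 2 hn0
    have h2 : 2^(m+1) = 2 * C := by rw [hCdef, pow_succ]; ring
    omega
  have hnlt : n < 2^(m+2) := by
    have h1 : n < 2^(Nat.log 2 n + 1) := Nat.lt_pow_succ_log_self (by norm_num) n
    have h2 : Nat.log 2 n + 1 = m + 2 := by omega
    rwa [h2] at h1
  refine ⟨m, ?_, myA n C, fun _ => myY n, fun j => myQ n (j:ℕ), fun _ => 2 - (C:ℝ),
    ?_, ?_, ?_, ?_⟩
  · -- log bound
    have hcast : (n:ℝ) ≤ 2^(m+2) := by exact_mod_cast hnlt.le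
    have hlogn : Real.log n ≤ ((m:ℝ)+2) * Real.log 2 := by
      calc Real.log n ≤ Real.log (2^(m+2)) :=
            Real.log_le_log (by positivity) (by exact_mod_cast hcast)
        _ = ((m:ℝ)+2) * Real.log 2 := by
            rw [Real.log_pow]; push_cast; ring
    have hmr : (3:ℝ) ≤ (m:ℝ) := by exact_mod_cast hm3
    have key : (1 / (2 * Real.log 2)) * (((m:ℝ)+2) * Real.log 2) = ((m:ℝ)+2)/2 := by
      field_simp
    calc (1 / (2 * Real.log 2)) * Real.log n
        ≤ (1 / (2 * Real.log 2)) * (((m:ℝ)+2) * Real.log 2) :=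
          mul_le_mul_of_nonneg_left hlogn (by positivity)
      _ = ((m:ℝ)+2)/2 := key
      _ ≤ (m:ℝ) := by linarith
  · -- symmetry
    intro i k
    unfold myA
    by_cases h : i = k
    · simp [h]
    · rw [if_neg h, if_neg (Ne.symm h), mul_comm]
  · -- nonneg
    intro i k
    unfold myA
    split
    · exact le_refl 0
    · apply mul_nonneg <;> split <;> norm_num
  · -- diagonal
    intro i
    unfold myA
    simp
  · -- shattering
    intro T
    set t : ℕ := ∑ j ∈ T, 2^(j:ℕ) with ht
    have htC : t < C := by
      calc t ≤ ∑ j ∈ (Finset.univ : Finset (Fin m)), 2^(j:ℕ) :=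
            Finset.sum_le_sum_of_subset (Finset.subset_univ T)
        _ = ∑ k ∈ Finset.range m, 2^k := Fin.sum_univ_eq_sum_range (fun k => 2^k) m
        _ < 2^m := sum_range_two_pow_lt m
        _ = C := hCdef.symm
    refine ⟨(t:ℝ) + 1/2, by positivity, ?_⟩
    intro j
    have hbit : t / 2^(j:ℕ) % 2 = if j ∈ T then 1 else 0 := by
      have himg : t = ∑ a ∈ T.image Fin.val, 2^a := by
        rw [ht, Finset.sum_image]
        intro a _ b _ hab
        exact Fin.val_injective hab
      rw [himg, two_pow_sum_div]
      have : (j:ℕ) ∈ T.image Fin.val ↔ j ∈ T := by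
        simp [Finset.mem_image, Fin.val_inj]
      simp [this]
    show 2 - (C:ℝ) < rprt n ((t:ℝ)+1/2) (myA n C) (myY n) (myQ n (j:ℕ)) ↔ j ∈ T
    rw [main_eval n C m hCn (by omega) hCdef t htC (j:ℕ)]
    by_cases hjT : j ∈ T
    · have hodd : Odd (t / 2^(j:ℕ)) := by
        rw [Nat.odd_iff, hbit, if_pos hjT]
      rw [if_pos hodd]
      simp only [hjT, iff_true]
      norm_num
    · have hodd : ¬ Odd (t / 2^(j:ℕ)) := by
        rw [Nat.odd_iff, hbit, if_neg hjT]
        norm_num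
      rw [if_neg hodd]
      simp only [hjT, iff_false, not_lt]
      norm_num
end

section
/- Let m ≥ 1 and B ≥ 0 be natural numbers, let f_1, …, f_m : ℝ → ℝ be functions, and let r_1, …, r_m ∈ ℝ. Suppose that for each k ∈ {1, …, m} there is a finite set P_k ⊆ ℝ with |P_k| ≤ B such that for all real s ≤ t, if the closed interval [s, t] contains no point of P_k then (f_k(s) > r_k if and only if f_k(t) > r_k). Then the number of distinct Boolean vectors of the form (1{f_1(s) > r_1}, …, 1{f_m(s) > r_m}) as s ranges over ℝ is at most 2mB + 1. In particular, if for every subset T ⊆ {1, …, m} there exists s_T ∈ ℝ with f_k(s_T) > r_k if and only if k ∈ T (i.e., the samples are shattered with witnesses r_1, …, r_m), then 2^m ≤ 2mB + 1. -/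
theorem stmt_15 (m B : ℕ) (hm : 1 ≤ m) (f : Fin m → ℝ → ℝ) (r : Fin m → ℝ)
    (P : Fin m → Finset ℝ) (hP : ∀ k, (P k).card ≤ B)
    (hflip : ∀ k : Fin m, ∀ s t : ℝ, s ≤ t → (∀ x ∈ P k, x ∉ Set.Icc s t) →
      (r k < f k s ↔ r k < f k t)) :
    {v : Fin m → Prop | ∃ s : ℝ, v = fun k => r k < f k s}.ncard ≤ 2 * m * B + 1 ∧
      ((∀ T : Finset (Fin m), ∃ s : ℝ, ∀ k : Fin m, (r k < f k s ↔ k ∈ T)) →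
        2 ^ m ≤ 2 * m * B + 1) := by
  classical
  set S : Set (Fin m → Prop) := {v : Fin m → Prop | ∃ s : ℝ, v = fun k => r k < f k s} with hS
  set Q : Finset ℝ := Finset.univ.biUnion P with hQ
  have hQcard : Q.card ≤ m * B := by
    calc Q.card ≤ ∑ k, (P k).card := Finset.card_biUnion_le
    _ ≤ ∑ _k : Fin m, B := Finset.sum_le_sum (fun k _ => hP k)
    _ = m * B := by simp [mul_comm]
  set lab : ℝ → (Fin m → Prop) := fun s k => r k < f k s with hlab
  set ψ : ℝ → ℕ := fun s =>
    (Q.filter (fun x => x < s)).card + (Q.filter (fun x => x ≤ s)).card with hψ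
  have hψbound : ∀ s, ψ s ≤ 2 * m * B := by
    intro s
    have h1 : (Q.filter (fun x => x < s)).card ≤ Q.card := Finset.card_filter_le _ _
    have h2 : (Q.filter (fun x => x ≤ s)).card ≤ Q.card := Finset.card_filter_le _ _
    have : ψ s ≤ Q.card + Q.card := Nat.add_le_add h1 h2
    have h3 : 2 * m * B = m * B + m * B := by ring
    omega
  have key : ∀ s t : ℝ, ψ s = ψ t → lab s = lab t := by
    have main : ∀ s t : ℝ, s ≤ t → ψ s = ψ t → lab s = lab t := by
      intro s t hst heq
      rcases eq_or_lt_of_le hst with rfl | hlt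
      · rfl
      have hempty : ∀ x ∈ Q, x ∉ Set.Icc s t := by
        intro x hxQ hx
        obtain ⟨hsx, hxt⟩ := hx
        have hsub1 : Q.filter (fun y => y < s) ⊆ Q.filter (fun y => y < t) := by
          intro y hy
          simp only [Finset.mem_filter] at hy ⊢
          exact ⟨hy.1, lt_of_lt_of_le hy.2 hst⟩
        have hsub2 : Q.filter (fun y => y ≤ s) ⊆ Q.filter (fun y => y ≤ t) := by
          intro y hy
          simp only [Finset.mem_filter] at hy ⊢
          exact ⟨hy.1, le_trans hy.2 hst⟩
        rcases eq_or_lt_of_le hxt with rfl | hxlt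
        · have hlt2 : (Q.filter (fun y => y ≤ s)).card < (Q.filter (fun y => y ≤ x)).card := by
            apply Finset.card_lt_card
            refine ⟨hsub2, fun hsub => ?_⟩
            have h := hsub (Finset.mem_filter.mpr ⟨hxQ, le_refl x⟩)
            have := (Finset.mem_filter.mp h).2
            linarith
          have := Finset.card_le_card hsub1
          simp only [hψ] at heq
          omega
        · have hlt1 : (Q.filter (fun y => y < s)).card < (Q.filter (fun y => y < t)).card := by
            apply Finset.card_lt_card
            refine ⟨hsub1, fun hsub => ?_⟩
            have h := hsub (Finset.mem_filter.mpr ⟨hxQ, hxlt⟩)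
            have := (Finset.mem_filter.mp h).2
            linarith
          have := Finset.card_le_card hsub2
          simp only [hψ] at heq
          omega
      funext k
      exact propext (hflip k s t hst (fun x hx =>
        hempty x (Finset.mem_biUnion.mpr ⟨k, Finset.mem_univ k, hx⟩)))
    intro s t heq
    rcases le_total s t with h | h
    · exact main s t h heq
    · exact (main t s h heq.symm).symm
  set F : ℕ → (Fin m → Prop) := fun n =>
    if h : ∃ s, ψ s = n then lab h.choose else (fun _ => False) with hF
  have hsub : S ⊆ F '' (Set.Iic (2 * m * B)) := by
    rintro v ⟨s, rfl⟩
    refine ⟨ψ s, hψbound s, ?_⟩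
    have hex : ∃ s', ψ s' = ψ s := ⟨s, rfl⟩
    simp only [hF, dif_pos hex]
    exact key _ _ hex.choose_spec
  have hIic : (Set.Iic (2 * m * B)).ncard = 2 * m * B + 1 := by
    rw [← Finset.coe_Iic, Set.ncard_coe_finset, Nat.card_Iic]
  have hfinIic : (Set.Iic (2 * m * B) : Set ℕ).Finite := Set.finite_Iic _
  have hSfin : S.Finite := Set.Finite.subset (hfinIic.image F) hsub
  have h1 : S.ncard ≤ 2 * m * B + 1 := by
    calc S.ncard ≤ (F '' Set.Iic (2 * m * B)).ncard :=
          Set.ncard_le_ncard hsub (hfinIic.image F)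
    _ ≤ (Set.Iic (2 * m * B)).ncard := Set.ncard_image_le hfinIic
    _ = 2 * m * B + 1 := hIic
  refine ⟨h1, fun hshatter => ?_⟩
  set g : Finset (Fin m) → (Fin m → Prop) := fun T k => k ∈ T with hg
  have hginj : Function.Injective g := by
    intro T T' h
    ext k
    exact iff_of_eq (congrFun h k)
  have hgsub : Set.range g ⊆ S := by
    rintro v ⟨T, rfl⟩
    obtain ⟨s, hs⟩ := hshatter T
    exact ⟨s, by funext k; exact propext (hs k).symm⟩
  have h2 : 2 ^ m ≤ S.ncard := by
    have hcard : (Set.range g).ncard = 2 ^ m := by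
      rw [← Set.image_univ, Set.ncard_image_of_injective _ hginj, Set.ncard_univ,
        Nat.card_eq_fintype_card, Fintype.card_finset, Fintype.card_fin]
    calc 2 ^ m = (Set.range g).ncard := hcard.symm
    _ ≤ S.ncard := Set.ncard_le_ncard hgsub hSfin
  omega
end
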